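/- arXiv:2407.20206 — 5 statements merged into one kernel-verified Lean document; each statement's English description precedes it below -/
import Mathlib

section
/- Let H : ℂ × ℂ → ℂ be analytic at the point (0,0). If H(u, exp(-1/u)) = 0 for all sufficiently small real u > 0, then H vanishes identically on some neighborhood of (0,0) in ℂ × ℂ. -/
open Filter Set Complex Metric

/-- An analytic function of one complex variable bounded by `K * exp (-1/u)` along real
`u → 0⁺` vanishes in a neighborhood of `0`. -/
lemma analytic_zero_of_exp_small {g : ℂ → ℂ} (hg : AnalyticAt ℂ g 0) {K : ℝ}
    (hb : ∀ᶠ u : ℝ in nhdsWithin 0 (Set.Ioi 0), ‖g u‖ ≤ K * Real.exp (-1/u)) :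
    ∀ᶠ z in nhds (0:ℂ), g z = 0 := by
  by_contra hcon
  have hne : analyticOrderAt g 0 ≠ ⊤ := fun h => hcon (analyticOrderAt_eq_top.mp h)
  obtain ⟨n, hn⟩ := (WithTop.ne_top_iff_exists).mp hne
  obtain ⟨h, hhA, hh0, hfac⟩ := (hg.analyticOrderAt_eq_natCast (n := n)).mp hn.symm
  have hcoe : Tendsto (fun u : ℝ => (u : ℂ)) (nhdsWithin 0 (Set.Ioi 0)) (nhds 0) := by
    have := Complex.continuous_ofReal.continuousAt (x := 0)
    simpa using this.tendsto.mono_left nhdsWithin_le_nhds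
  have hfac' : ∀ᶠ u : ℝ in nhdsWithin 0 (Set.Ioi 0),
      g u = (u : ℂ) ^ n • h u := by
    have := hcoe.eventually hfac
    simpa using this
  have hbound : ∀ᶠ u : ℝ in nhdsWithin 0 (Set.Ioi 0),
      ‖h u‖ ≤ K * ((1/u) ^ n * Real.exp (-(1/u))) := by
    filter_upwards [hb, hfac', self_mem_nhdsWithin] with u hbu hfu hu
    have hu0 : (0:ℝ) < u := hu
    have hnorm : ‖g (u:ℂ)‖ = u ^ n * ‖h u‖ := by
      rw [hfu]
      simp [norm_smul, abs_of_pos hu0]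
    have hpow : (0:ℝ) < u ^ n := pow_pos hu0 n
    rw [hnorm] at hbu
    have : ‖h u‖ ≤ K * Real.exp (-1/u) / u ^ n := by
      rw [le_div_iff₀ hpow]
      linarith [hbu]
    calc ‖h u‖ ≤ K * Real.exp (-1/u) / u ^ n := this
      _ = K * ((1/u) ^ n * Real.exp (-(1/u))) := by
          rw [div_pow, one_pow, neg_div, one_div]
          field_simp
  have hzero : Tendsto (fun u : ℝ => K * ((1/u) ^ n * Real.exp (-(1/u))))
      (nhdsWithin 0 (Set.Ioi 0)) (nhds 0) := by
    have h1 : Tendsto (fun u : ℝ => (1/u)) (nhdsWithin 0 (Set.Ioi 0)) atTop := by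
      simpa [one_div] using tendsto_inv_nhdsGT_zero (𝕜 := ℝ)
    have h2 := (Real.tendsto_pow_mul_exp_neg_atTop_nhds_zero n).comp h1
    have := h2.const_mul K
    simpa using this
  have hlim : Tendsto (fun u : ℝ => h u) (nhdsWithin 0 (Set.Ioi 0)) (nhds 0) :=
    squeeze_zero_norm' hbound hzero
  have hlim' : Tendsto (fun u : ℝ => h u) (nhdsWithin 0 (Set.Ioi 0)) (nhds (h 0)) := by
    have := (hhA.continuousAt.tendsto).comp hcoe
    exact this
  exact hh0 (tendsto_nhds_unique hlim' hlim)

/-- The partial derivative in the second coordinate. -/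
noncomputable def Dy (f : ℂ × ℂ → ℂ) : ℂ × ℂ → ℂ := fun q => fderiv ℂ f q (0, 1)

/-- Iterated partial derivative in the second coordinate. -/
noncomputable def DyIter : ℕ → (ℂ × ℂ → ℂ) → (ℂ × ℂ → ℂ)
  | 0, f => f
  | n+1, f => Dy (DyIter n f)

lemma DyIter_analytic {f : ℂ × ℂ → ℂ} {s : Set (ℂ × ℂ)} (hf : AnalyticOnNhd ℂ f s) :
    ∀ n, AnalyticOnNhd ℂ (DyIter n f) s := by
  intro n
  induction n with
  | zero => exact hf
  | succ n ih =>
      intro q hq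
      have h1 : AnalyticAt ℂ (fderiv ℂ (DyIter n f)) q := (ih.fderiv) q hq
      exact ((ContinuousLinearMap.apply ℂ ℂ ((0:ℂ),(1:ℂ))).analyticAt _).comp h1

lemma deriv_slice {f : ℂ × ℂ → ℂ} {x y : ℂ} (hf : DifferentiableAt ℂ f (x, y)) :
    deriv (fun y' => f (x, y')) y = Dy f (x, y) := by
  have hγ : HasDerivAt (fun y' : ℂ => ((x : ℂ), y')) ((0:ℂ), (1:ℂ)) y :=
    (hasDerivAt_const y x).prodMk (hasDerivAt_id y)
  exact (hf.hasFDerivAt.comp_hasDerivAt y hγ).deriv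

lemma iteratedDeriv_slice {f : ℂ × ℂ → ℂ} {ρ : ℝ} (hf : AnalyticOnNhd ℂ f (Metric.ball 0 ρ))
    (n : ℕ) {x : ℂ} (hx : ‖x‖ < ρ) :
    ∀ y : ℂ, ‖y‖ < ρ → iteratedDeriv n (fun y' => f (x, y')) y = DyIter n f (x, y) := by
  induction n with
  | zero => intro y hy; simp [DyIter]
  | succ n ih =>
      intro y hy
      have hmem : ((x : ℂ), y) ∈ Metric.ball (0 : ℂ × ℂ) ρ := by
        rw [mem_ball_zero_iff, Prod.norm_def]
        exact max_lt hx hy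
      rw [iteratedDeriv_succ]
      have hev : (iteratedDeriv n (fun y' => f (x, y')))
          =ᶠ[nhds y] (fun y' => DyIter n f (x, y')) := by
        have hO : IsOpen {y' : ℂ | ‖y'‖ < ρ} := by
          have : {y' : ℂ | ‖y'‖ < ρ} = Metric.ball (0:ℂ) ρ := by
            ext y'; simp [mem_ball_zero_iff]
          rw [this]; exact Metric.isOpen_ball
        filter_upwards [hO.mem_nhds hy] with y' hy' using ih y' hy'
      rw [hev.deriv_eq]
      exact deriv_slice ((DyIter_analytic hf n) _ hmem).differentiableAt

set_option maxHeartbeats 2000000 in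
/-- If `H : ℂ × ℂ → ℂ` is analytic at `(0,0)` and `H (u, exp (-1/u)) = 0` for all
sufficiently small real `u > 0`, then `H` vanishes identically on a neighborhood
of `(0,0)`. -/
theorem analytic_vanishing_on_exp_curve (H : ℂ × ℂ → ℂ)
    (hH : AnalyticAt ℂ H (0, 0))
    (hvan : ∀ᶠ u : ℝ in nhdsWithin 0 (Set.Ioi 0),
      H ((u : ℂ), Complex.exp (-1 / (u : ℂ))) = 0) :
    ∀ᶠ p : ℂ × ℂ in nhds (0, 0), H p = 0 := by
  obtain ⟨ρ, hρ, hAn⟩ := hH.exists_ball_analyticOnNhd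
  -- bound for H on the closed polydisc of radius ρ/2
  have hsub : Metric.closedBall (0:ℂ × ℂ) (ρ/2) ⊆ Metric.ball (0:ℂ × ℂ) ρ := by
    intro q hq
    have := mem_closedBall_zero_iff.mp hq
    rw [mem_ball_zero_iff]
    linarith
  obtain ⟨M, hM⟩ : ∃ M, ∀ q ∈ Metric.closedBall (0:ℂ × ℂ) (ρ/2), ‖H q‖ ≤ M := by
    refine (isCompact_closedBall _ _).exists_bound_of_continuousOn ?_
    exact fun q hq => ((hAn q (hsub hq)).continuousAt).continuousWithinAt
  have hM0 : 0 ≤ M :=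
    le_trans (norm_nonneg _) (hM 0 (mem_closedBall_self (by positivity)))
  set R : NNReal := Real.toNNReal (ρ/2) with hRdef
  have hRc : (R : ℝ) = ρ/2 := Real.coe_toNNReal _ (by positivity)
  have hR0 : 0 < R := by
    rw [← NNReal.coe_lt_coe, hRc]; positivity
  set S : ℂ → ℂ → ℂ := fun x y => H (x, y) with hSdef
  -- differentiability of slices
  have hdiff : ∀ x : ℂ, ‖x‖ < ρ → DifferentiableOn ℂ (S x) (Metric.closedBall 0 (R:ℝ)) := by
    intro x hx y hy
    have hmem : ((x:ℂ), y) ∈ Metric.ball (0:ℂ × ℂ) ρ := by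
      rw [mem_ball_zero_iff, Prod.norm_def]
      refine max_lt hx ?_
      have := mem_closedBall_zero_iff.mp hy
      rw [hRc] at this
      linarith
    have hd : DifferentiableAt ℂ (S x) y :=
      ((hAn _ hmem).differentiableAt).comp y ((differentiableAt_const x).prodMk differentiableAt_id)
    exact hd.differentiableWithinAt
  have hPS : ∀ x : ℂ, ‖x‖ < ρ →
      HasFPowerSeriesOnBall (S x) (cauchyPowerSeries (S x) 0 (R:ℝ)) 0 R :=
    fun x hx => (hdiff x hx).hasFPowerSeriesOnBall hR0
  -- Cauchy estimates for the coefficients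
  have hcoeff_bound : ∀ x : ℂ, ‖x‖ ≤ ρ/2 → ∀ n,
      ‖(cauchyPowerSeries (S x) 0 (R:ℝ)).coeff n‖ ≤ M * (2/ρ)^n := by
    intro x hx n
    have hxρ : ‖x‖ < ρ := lt_of_le_of_lt hx (by linarith)
    have h1 := norm_cauchyPowerSeries_le (S x) 0 (R:ℝ) n
    rw [FormalMultilinearSeries.norm_apply_eq_norm_coef] at h1
    have hcm : Continuous fun θ : ℝ => S x (circleMap 0 (R:ℝ) θ) := by
      refine ContinuousOn.comp_continuous (g := S x) ((hdiff x hxρ).continuousOn)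
        (continuous_circleMap 0 (R:ℝ)) ?_
      exact fun θ => circleMap_mem_closedBall 0 R.coe_nonneg θ
    have hint : (∫ θ : ℝ in (0)..2 * Real.pi, ‖S x (circleMap 0 (R:ℝ) θ)‖)
        ≤ 2 * Real.pi * M := by
      have hb : ∀ θ ∈ Set.uIcc (0:ℝ) (2*Real.pi), ‖S x (circleMap 0 (R:ℝ) θ)‖ ≤ M := by
        intro θ _
        apply hM
        rw [Metric.mem_closedBall, dist_zero_right, Prod.norm_def]
        refine max_le hx ?_
        have : ‖circleMap 0 (R:ℝ) θ‖ = |(R:ℝ)| := norm_circleMap_zero _ _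
        rw [this, _root_.abs_of_nonneg R.coe_nonneg, hRc]
      have hI : IntervalIntegrable (fun θ : ℝ => ‖S x (circleMap 0 (R:ℝ) θ)‖)
          MeasureTheory.volume 0 (2*Real.pi) := (hcm.norm).intervalIntegrable _ _
      calc (∫ θ : ℝ in (0)..2 * Real.pi, ‖S x (circleMap 0 (R:ℝ) θ)‖)
          ≤ ∫ _ : ℝ in (0)..2 * Real.pi, M := by
            refine intervalIntegral.integral_mono_on (by positivity) hI
              intervalIntegrable_const ?_
            intro θ hθ
            exact hb θ (by rw [Set.uIcc_of_le (by positivity)]; exact hθ)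
        _ = 2 * Real.pi * M := by simp [mul_comm]
    have h2 : ((2 * Real.pi)⁻¹ * ∫ θ : ℝ in (0)..2 * Real.pi,
        ‖S x (circleMap 0 (R:ℝ) θ)‖) ≤ M := by
      rw [inv_mul_le_iff₀ (by positivity)]
      linarith [hint]
    have h3 : |(R:ℝ)|⁻¹ ^ n = (2/ρ)^n := by
      rw [_root_.abs_of_nonneg R.coe_nonneg, hRc]
      norm_num
    calc ‖(cauchyPowerSeries (S x) 0 (R:ℝ)).coeff n‖
        ≤ ((2 * Real.pi)⁻¹ * ∫ θ : ℝ in (0)..2 * Real.pi,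
            ‖S x (circleMap 0 (R:ℝ) θ)‖) * |(R:ℝ)|⁻¹ ^ n := h1
      _ ≤ M * (2/ρ)^n := by
          rw [h3]
          exact mul_le_mul_of_nonneg_right h2 (by positivity)
  -- coefficients in terms of iterated partial derivatives
  have hcoeff_eq : ∀ x : ℂ, ‖x‖ < ρ → ∀ n : ℕ,
      (n.factorial : ℂ) * (cauchyPowerSeries (S x) 0 (R:ℝ)).coeff n = DyIter n H (x, 0) := by
    intro x hx n
    have h1 := (hPS x hx).factorial_smul (1:ℂ) n
    rw [← iteratedDeriv_eq_iteratedFDeriv] at h1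
    have h2 : iteratedDeriv n (S x) 0 = DyIter n H (x, 0) :=
      iteratedDeriv_slice hAn n hx 0 (by simpa using hρ)
    rw [h2] at h1
    calc (n.factorial : ℂ) * (cauchyPowerSeries (S x) 0 (R:ℝ)).coeff n
        = n.factorial • ((cauchyPowerSeries (S x) 0 (R:ℝ)) n fun _ => (1:ℂ)) := by
          rw [nsmul_eq_mul]
          rfl
      _ = DyIter n H (x, 0) := h1

  have hDk := DyIter_analytic hAn
  -- analyticity of x ↦ DyIter k H (x, 0)
  have hgA : ∀ k, AnalyticOnNhd ℂ (fun x : ℂ => DyIter k H (x, 0)) (Metric.ball (0:ℂ) ρ) := by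
    intro k x hx
    have hmem : ((x:ℂ), (0:ℂ)) ∈ Metric.ball (0:ℂ × ℂ) ρ := by
      rw [mem_ball_zero_iff, Prod.norm_def]
      simpa using mem_ball_zero_iff.mp hx
    have h1 : AnalyticAt ℂ (DyIter k H) ((ContinuousLinearMap.inl ℂ ℂ ℂ) x) := by
      simpa using (hDk k) _ hmem
    have h2 := h1.comp ((ContinuousLinearMap.inl ℂ ℂ ℂ).analyticAt x)
    have h3 : (DyIter k H ∘ (ContinuousLinearMap.inl ℂ ℂ ℂ)) = fun x : ℂ => DyIter k H (x, 0) := by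
      funext z; simp [Function.comp]
    rwa [h3] at h2
  -- membership in the emetric ball
  have hmemE : ∀ z : ℂ, ‖z‖ < ρ/2 → z ∈ Metric.eball (0:ℂ) R := by
    intro z hz
    rw [mem_eball_zero_iff]
    exact ENNReal.coe_lt_coe.mpr (by rw [← NNReal.coe_lt_coe, coe_nnnorm, hRc]; exact hz)
  -- main claim: all partial derivatives in y vanish on the x-axis near 0
  have main : ∀ k, ∀ x ∈ Metric.ball (0:ℂ) ρ, DyIter k H (x, 0) = 0 := by
    intro k
    induction k using Nat.strong_induction_on with
    | _ k ih =>
    have hb : ∀ᶠ u : ℝ in nhdsWithin 0 (Set.Ioi 0),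
        ‖(fun x : ℂ => DyIter k H (x, 0)) u‖
          ≤ ((k.factorial : ℝ) * (2 * M * (2/ρ)^(k+1))) * Real.exp (-1/u) := by
      have hsmall : ∀ᶠ u : ℝ in nhdsWithin 0 (Set.Ioi 0), u < ρ/2 :=
        eventually_nhdsWithin_of_eventually_nhds (Iio_mem_nhds (by positivity))
      have hYtend : Tendsto (fun u : ℝ => Real.exp (-1/u))
          (nhdsWithin 0 (Set.Ioi 0)) (nhds 0) := by
        have h1 : Tendsto (fun u : ℝ => u⁻¹) (nhdsWithin 0 (Set.Ioi 0)) atTop :=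
          tendsto_inv_nhdsGT_zero
        have h2 : Tendsto (fun u : ℝ => -(u⁻¹)) (nhdsWithin 0 (Set.Ioi 0)) atBot :=
          tendsto_neg_atTop_atBot.comp h1
        have h3 := Real.tendsto_exp_atBot.comp h2
        have heq : (fun u : ℝ => Real.exp (-(u⁻¹))) = fun u : ℝ => Real.exp (-1/u) := by
          funext v; rw [neg_div, one_div]
        rw [show (Real.exp ∘ fun u : ℝ => -(u⁻¹)) = fun u : ℝ => Real.exp (-(u⁻¹)) from rfl, heq]
          at h3
        exact h3
      have hYsmall : ∀ᶠ u : ℝ in nhdsWithin 0 (Set.Ioi 0), Real.exp (-1/u) < ρ/4 :=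
        hYtend.eventually_lt_const (by positivity)
      filter_upwards [hvan, hsmall, hYsmall, self_mem_nhdsWithin] with u hvu hsu hYu hu0
      have hu0' : (0:ℝ) < u := hu0
      set x : ℂ := ((u : ℝ) : ℂ) with hxdef
      set Y : ℂ := Complex.exp (-1 / (u:ℂ)) with hYdef
      have hxn : ‖x‖ = u := by
        rw [hxdef, Complex.norm_real, Real.norm_eq_abs, abs_of_pos hu0']
      have hxhalf : ‖x‖ ≤ ρ/2 := by rw [hxn]; linarith
      have hxρ : ‖x‖ < ρ := by rw [hxn]; linarith
      have hYnorm : ‖Y‖ = Real.exp (-1/u) := by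
        rw [hYdef, Complex.norm_exp]
        congr 1
        have : (-1 / (u:ℂ)) = (((-1/u : ℝ)) : ℂ) := by push_cast; ring
        rw [this, Complex.ofReal_re]
      have hYpos : 0 < ‖Y‖ := by rw [hYnorm]; exact Real.exp_pos _
      have hYρ : ‖Y‖ ≤ ρ/4 := by rw [hYnorm]; linarith
      set q : ℝ := (2/ρ) * ‖Y‖ with hqdef
      have hq0 : 0 ≤ q := by positivity
      have hqhalf : q ≤ 1/2 := by
        have h2ρ : (0:ℝ) ≤ 2/ρ := by positivity
        calc q ≤ (2/ρ) * (ρ/4) := mul_le_mul_of_nonneg_left hYρ h2ρ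
          _ = 1/2 := by field_simp; ring
      have hq1 : q < 1 := lt_of_le_of_lt hqhalf (by norm_num)
      have hY1 : Y ∈ Metric.eball (0:ℂ) R := hmemE Y (by linarith)
      have hsum := (hPS x hxρ).hasSum hY1
      rw [zero_add] at hsum
      have hSxY : S x Y = 0 := hvu
      rw [hSxY] at hsum
      set a : ℕ → ℂ := fun n => (cauchyPowerSeries (S x) 0 (R:ℝ)).coeff n with hadef
      have hsum' : HasSum (fun n => Y ^ n * a n) 0 := by
        have he : ∀ n, ((cauchyPowerSeries (S x) 0 (R:ℝ)) n fun _ => Y) = Y ^ n * a n := by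
          intro n
          rw [FormalMultilinearSeries.apply_eq_pow_smul_coeff, smul_eq_mul]
        exact (funext he) ▸ hsum
      have ha0 : ∀ j < k, a j = 0 := by
        intro j hj
        have h1 := hcoeff_eq x hxρ j
        rw [ih j hj x (mem_ball_zero_iff.mpr hxρ)] at h1
        exact (mul_eq_zero.mp h1).resolve_left
          (Nat.cast_ne_zero.mpr (Nat.factorial_ne_zero j))
      have hsummable := hsum'.summable
      have hshift : Summable (fun i : ℕ => Y ^ (i + (k+1)) * a (i + (k+1))) :=
        (summable_nat_add_iff (k+1)).2 hsummable
      have htail := Summable.sum_add_tsum_nat_add' (f := fun n => Y ^ n * a n) (k := k+1) hshift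
      rw [hsum'.tsum_eq] at htail
      have hfin : (∑ i ∈ Finset.range (k+1), Y ^ i * a i) = Y ^ k * a k := by
        refine Finset.sum_eq_single_of_mem k (Finset.self_mem_range_succ k) ?_
        intro j hj hne
        have hjk : j < k := lt_of_le_of_ne (Nat.lt_succ_iff.mp (Finset.mem_range.mp hj)) hne
        rw [ha0 j hjk, mul_zero]
      rw [hfin] at htail
      have hkey : Y ^ k * a k = - ∑' i : ℕ, Y ^ (i + (k+1)) * a (i + (k+1)) :=
        eq_neg_of_add_eq_zero_left htail
      have hterm : ∀ i : ℕ, ‖Y ^ (i + (k+1)) * a (i + (k+1))‖ ≤ (M * q^(k+1)) * q^i := by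
        intro i
        have hac := hcoeff_bound x hxhalf (i + (k+1))
        have hn : ‖Y ^ (i+(k+1)) * a (i+(k+1))‖ = ‖Y‖^(i+(k+1)) * ‖a (i+(k+1))‖ := by
          rw [norm_mul, norm_pow]
        rw [hn]
        calc ‖Y‖^(i+(k+1)) * ‖a (i+(k+1))‖
            ≤ ‖Y‖^(i+(k+1)) * (M * (2/ρ)^(i+(k+1))) :=
              mul_le_mul_of_nonneg_left hac (by positivity)
          _ = M * q ^ (i + (k+1)) := by rw [hqdef, mul_pow]; ring
          _ = (M * q^(k+1)) * q^i := by rw [pow_add]; ring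
      have hgeo : HasSum (fun i : ℕ => (M * q^(k+1)) * q^i) ((M * q^(k+1)) * (1-q)⁻¹) :=
        (hasSum_geometric_of_lt_one hq0 hq1).mul_left _
      have htb : ‖∑' i : ℕ, Y ^ (i + (k+1)) * a (i + (k+1))‖ ≤ (M * q^(k+1)) * (1-q)⁻¹ :=
        tsum_of_norm_bounded hgeo hterm
      have hinv2 : (1-q)⁻¹ ≤ 2 := by
        have h12 : (1:ℝ)/2 ≤ 1 - q := by linarith
        have h2 := one_div_le_one_div_of_le (by norm_num : (0:ℝ) < 1/2) h12
        calc (1-q)⁻¹ = 1/(1-q) := (one_div _).symm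
          _ ≤ 1/(1/2) := h2
          _ = 2 := by norm_num
      have hbig : ‖a k‖ * ‖Y‖^k ≤ (2 * M * (2/ρ)^(k+1) * ‖Y‖) * ‖Y‖^k := by
        have h4 : ‖Y ^ k * a k‖ = ‖a k‖ * ‖Y‖^k := by rw [norm_mul, norm_pow]; ring
        calc ‖a k‖ * ‖Y‖^k = ‖Y ^ k * a k‖ := h4.symm
          _ = ‖∑' i : ℕ, Y ^ (i + (k+1)) * a (i + (k+1))‖ := by rw [hkey, norm_neg]
          _ ≤ (M * q^(k+1)) * (1-q)⁻¹ := htb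
          _ ≤ (M * q^(k+1)) * 2 :=
              mul_le_mul_of_nonneg_left hinv2 (by positivity)
          _ = (2 * M * (2/ρ)^(k+1) * ‖Y‖) * ‖Y‖^k := by
              rw [hqdef, mul_pow, pow_succ]; ring
      have hak : ‖a k‖ ≤ 2 * M * (2/ρ)^(k+1) * ‖Y‖ :=
        le_of_mul_le_mul_right hbig (pow_pos hYpos k)
      have hDval : DyIter k H (x, 0) = (k.factorial : ℂ) * a k := (hcoeff_eq x hxρ k).symm
      show ‖DyIter k H (x, 0)‖ ≤ _
      rw [hDval]
      calc ‖(k.factorial : ℂ) * a k‖ = (k.factorial : ℝ) * ‖a k‖ := by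
            rw [norm_mul, Complex.norm_natCast]
        _ ≤ (k.factorial : ℝ) * (2 * M * (2/ρ)^(k+1) * ‖Y‖) :=
            mul_le_mul_of_nonneg_left hak (by positivity)
        _ = ((k.factorial : ℝ) * (2 * M * (2/ρ)^(k+1))) * Real.exp (-1/u) := by
            rw [hYnorm]; ring
    have hev0 := analytic_zero_of_exp_small ((hgA k) 0 (mem_ball_self hρ)) hb
    intro x hx
    have := (hgA k).eqOn_zero_of_preconnected_of_eventuallyEq_zero
      (convex_ball (0:ℂ) ρ).isPreconnected (mem_ball_self hρ)
      (by filter_upwards [hev0] with z hz; simpa using hz) hx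
    simpa using this
  -- conclusion
  have hhalf : (0:ℝ) < ρ/2 := by positivity
  filter_upwards [Metric.ball_mem_nhds (0:ℂ × ℂ) hhalf] with p hpmem
  obtain ⟨x, y⟩ := p
  rw [mem_ball_zero_iff, Prod.norm_def] at hpmem
  have hx2 : ‖x‖ < ρ/2 := lt_of_le_of_lt (le_max_left _ _) hpmem
  have hy2 : ‖y‖ < ρ/2 := lt_of_le_of_lt (le_max_right _ _) hpmem
  have hxρ : ‖x‖ < ρ := by linarith
  have hy1 : y ∈ Metric.eball (0:ℂ) R := hmemE y hy2
  have hsum := (hPS x hxρ).hasSum hy1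
  rw [zero_add] at hsum
  have hz : ∀ n : ℕ, ((cauchyPowerSeries (S x) 0 (R:ℝ)) n fun _ => y) = 0 := by
    intro n
    have h1 := hcoeff_eq x hxρ n
    rw [main n x (mem_ball_zero_iff.mpr hxρ)] at h1
    have hcf : (cauchyPowerSeries (S x) 0 (R:ℝ)).coeff n = 0 :=
      (mul_eq_zero.mp h1).resolve_left (Nat.cast_ne_zero.mpr (Nat.factorial_ne_zero n))
    rw [FormalMultilinearSeries.apply_eq_pow_smul_coeff, hcf, smul_zero]
  have h0 : HasSum (fun _ : ℕ => (0:ℂ)) (S x y) := (funext hz) ▸ hsum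
  exact (hasSum_zero.unique h0).symm
end

section
/- Let n ≥ 1 and let a₀, a₁, …, aₙ : ℂ → ℂ each be meromorphic at 0. If the identity Σ_{i=0}^{n} aᵢ(z) · exp(-i/z) = 0 holds for all z ≠ 0 in some punctured neighborhood of 0 in ℂ, then each aᵢ vanishes on a punctured neighborhood of 0 (equivalently, each aᵢ is the zero germ at 0). -/
open Filter Topology Complex

private lemma real_to_punctured : Tendsto (fun x : ℝ => (x:ℂ)) (𝓝[>] (0:ℝ)) (𝓝[≠] (0:ℂ)) := by
  rw [tendsto_nhdsWithin_iff]
  refine ⟨by simpa using (Complex.continuous_ofReal.tendsto 0).mono_left nhdsWithin_le_nhds, ?_⟩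
  filter_upwards [self_mem_nhdsWithin] with x hx
  simpa using ne_of_gt hx

/-- polynomial bound for a meromorphic function along the positive real axis -/
private lemma mero_bound {f : ℂ → ℂ} (hf : MeromorphicAt f 0) :
    ∃ (C : ℝ) (N : ℕ), 0 ≤ C ∧ ∀ᶠ x : ℝ in 𝓝[>] (0:ℝ), ‖f (x:ℂ)‖ ≤ C * x⁻¹ ^ N := by
  obtain ⟨N, hN⟩ := hf
  have hc : ContinuousAt (fun z : ℂ => (z - 0) ^ N • f z) 0 := hN.continuousAt
  set C : ℝ := ‖(fun z : ℂ => (z - 0) ^ N • f z) 0‖ + 1 with hC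
  have hev : ∀ᶠ z in 𝓝 (0:ℂ), ‖(z - 0) ^ N • f z‖ ≤ C := by
    have := hc.norm.eventually_le_const (by simp [hC] : ‖(fun z : ℂ => (z-0)^N • f z) 0‖ < C)
    exact this
  refine ⟨C, N, by positivity, ?_⟩
  filter_upwards [real_to_punctured.eventually (eventually_nhdsWithin_of_eventually_nhds hev),
    self_mem_nhdsWithin] with x hx hx0
  have hx0' : (0:ℝ) < x := hx0
  have hxn : ‖((x:ℂ))‖ ^ N = x ^ N := by
    rw [Complex.norm_real]; rw [Real.norm_of_nonneg hx0'.le]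
  have : ‖((x:ℂ) - 0) ^ N • f x‖ = x ^ N * ‖f x‖ := by
    rw [norm_smul, norm_pow, sub_zero, hxn]
  rw [this] at hx
  have hpow : (0:ℝ) < x ^ N := by positivity
  calc ‖f x‖ = (x ^ N * ‖f x‖) * x⁻¹ ^ N := by
        field_simp
        rw [one_div, inv_pow, mul_assoc, mul_inv_cancel₀ hpow.ne', mul_one]
      _ ≤ C * x⁻¹ ^ N := by
        apply mul_le_mul_of_nonneg_right hx (by positivity)

/-- a meromorphic function dominated by `x^{-N} e^{-1/x}` along the positive real axis
vanishes near 0 -/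
private lemma mero_vanish {f : ℂ → ℂ} (hf : MeromorphicAt f 0) (C : ℝ) (N : ℕ)
    (hb : ∀ᶠ x : ℝ in 𝓝[>] (0:ℝ), ‖f (x:ℂ)‖ ≤ C * x⁻¹ ^ N * Real.exp (-x⁻¹)) :
    ∀ᶠ z in 𝓝[≠] (0:ℂ), f z = 0 := by
  by_contra hcon
  have hord : meromorphicOrderAt f 0 ≠ ⊤ := fun h => hcon (meromorphicOrderAt_eq_top_iff.mp h)
  obtain ⟨d, hd⟩ := WithTop.ne_top_iff_exists.mp hord
  obtain ⟨g, hg, hg0, hfg⟩ := (meromorphicOrderAt_eq_int_iff (n := d) hf).mp hd.symm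
  have hgpos : 0 < ‖g 0‖ / 2 := half_pos (norm_pos_iff.mpr hg0)
  have hgc : ∀ᶠ z in 𝓝 (0:ℂ), ‖g 0‖ / 2 < ‖g z‖ :=
    hg.continuousAt.norm.eventually (eventually_gt_nhds (half_lt_self (norm_pos_iff.mpr hg0)))
  set m : ℕ := d.toNat with hm
  have hmd : d ≤ (m : ℤ) := Int.self_le_toNat d
  -- the key eventual inequality
  have key : ∀ᶠ x : ℝ in 𝓝[>] (0:ℝ),
      ‖g 0‖ / 2 ≤ C * ((x⁻¹) ^ (N + m) * Real.exp (-x⁻¹)) := by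
    filter_upwards [real_to_punctured.eventually hfg,
      real_to_punctured.eventually (eventually_nhdsWithin_of_eventually_nhds hgc),
      hb, self_mem_nhdsWithin,
      (eventually_nhdsWithin_of_eventually_nhds (eventually_lt_nhds one_pos))] with
        x hfx hgx hbx hx0 hx1
    have hx0' : (0:ℝ) < x := hx0
    have hxC : ((x:ℂ)) ≠ 0 := by exact_mod_cast ne_of_gt hx0'
    have hnorm : ‖f (x:ℂ)‖ = x ^ d * ‖g x‖ := by
      rw [hfx, sub_zero, smul_eq_mul, norm_mul, norm_zpow, Complex.norm_real,
        Real.norm_of_nonneg hx0'.le]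
    have hd1 : x ^ d * (‖g 0‖ / 2) ≤ C * x⁻¹ ^ N * Real.exp (-x⁻¹) := by
      refine le_trans ?_ hbx
      rw [hnorm]
      exact mul_le_mul_of_nonneg_left hgx.le (zpow_pos hx0' d).le
    have hzd : (0:ℝ) < x ^ d := zpow_pos hx0' d
    have hstep : ‖g 0‖ / 2 ≤ x ^ (-d) * (C * x⁻¹ ^ N * Real.exp (-x⁻¹)) := by
      have h2 := mul_le_mul_of_nonneg_left hd1 (zpow_pos hx0' (-d)).le
      calc ‖g 0‖ / 2 = x ^ (-d) * (x ^ d * (‖g 0‖ / 2)) := by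
            rw [← mul_assoc, ← zpow_add₀ (ne_of_gt hx0'), neg_add_cancel, zpow_zero, one_mul]
        _ ≤ _ := h2
    refine hstep.trans ?_
    have hxle : x ^ (-d) ≤ x⁻¹ ^ m := by
      rw [inv_pow, ← zpow_natCast, ← zpow_neg]
      exact zpow_le_zpow_right_of_le_one₀ hx0' hx1.le (neg_le_neg hmd)
    have h1 : x ^ (-d) * (C * x⁻¹ ^ N * Real.exp (-x⁻¹)) ≤
        x⁻¹ ^ m * (C * x⁻¹ ^ N * Real.exp (-x⁻¹)) := by
      have hC : 0 ≤ C := by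
        by_contra hC
        push_neg at hC
        have : C * x⁻¹ ^ N * Real.exp (-x⁻¹) < 0 := by
          apply mul_neg_of_neg_of_pos _ (Real.exp_pos _)
          exact mul_neg_of_neg_of_pos hC (by positivity)
        nlinarith [norm_nonneg (f (x:ℂ)), hbx]
      exact mul_le_mul_of_nonneg_right hxle (by positivity)
    refine h1.trans (le_of_eq ?_)
    rw [pow_add]
    ring
  -- the right-hand side tends to 0
  have htend : Tendsto (fun x : ℝ => C * ((x⁻¹) ^ (N + m) * Real.exp (-x⁻¹)))
      (𝓝[>] (0:ℝ)) (𝓝 0) := by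
    have := ((Real.tendsto_pow_mul_exp_neg_atTop_nhds_zero (N + m)).comp
      tendsto_inv_nhdsGT_zero).const_mul C
    simpa using this
  have : ‖g 0‖ / 2 ≤ 0 := ge_of_tendsto htend key
  linarith

private lemma aux_trans : ∀ (n : ℕ) (a : Fin (n + 1) → ℂ → ℂ),
    (∀ i, MeromorphicAt (a i) 0) →
    (∀ᶠ z in 𝓝[≠] (0:ℂ), ∑ i : Fin (n + 1), a i z * Complex.exp (-(i : ℕ) / z) = 0) →
    ∀ i, ∀ᶠ z in 𝓝[≠] (0:ℂ), a i z = 0 := by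
  intro n
  induction n with
  | zero =>
    intro a ha hsum i
    have hi : i = 0 := Fin.ext (Nat.lt_one_iff.mp i.isLt)
    subst hi
    filter_upwards [hsum] with z hz
    simpa using hz
  | succ n ih =>
    intro a ha hsum
    choose Cf Nf hCpos hbound using fun i : Fin (n + 1) => mero_bound (ha i.succ)
    set N : ℕ := Finset.univ.sup Nf with hN
    set C : ℝ := ∑ i, Cf i with hC
    -- norm of the exponential factor along the real axis
    have hexp : ∀ (k : ℕ) (x : ℝ), 0 < x →
        ‖Complex.exp (-(k : ℂ) / (x : ℂ))‖ = Real.exp (-(k : ℝ) / x) := by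
      intro k x hx
      have : (-(k : ℂ) / (x : ℂ)) = (((-(k : ℝ) / x) : ℝ) : ℂ) := by push_cast; ring
      rw [this, ← Complex.ofReal_exp, Complex.norm_real, Real.norm_of_nonneg (Real.exp_pos _).le]
    have h0 : ∀ᶠ z in 𝓝[≠] (0:ℂ), a 0 z = 0 := by
      apply mero_vanish (ha 0) C N
      have hev : ∀ᶠ x : ℝ in 𝓝[>] (0:ℝ),
          ∀ i : Fin (n + 1), ‖a i.succ (x:ℂ)‖ ≤ Cf i * x⁻¹ ^ Nf i :=
        eventually_all.mpr hbound
      filter_upwards [hev, real_to_punctured.eventually hsum, self_mem_nhdsWithin,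
        eventually_nhdsWithin_of_eventually_nhds (eventually_lt_nhds one_pos)] with
          x hbx hsx hx0 hx1
      have hx0' : (0:ℝ) < x := hx0
      have hxinv : (1:ℝ) ≤ x⁻¹ := (one_le_inv₀ hx0').mpr hx1.le
      rw [Fin.sum_univ_succ] at hsx
      have h00 : a 0 (x:ℂ) * Complex.exp (-((0 : Fin (n+2)) : ℕ) / (x:ℂ)) = a 0 (x:ℂ) := by
        simp
      rw [h00] at hsx
      have ha0 : a 0 (x:ℂ) = -∑ i : Fin (n + 1),
          a i.succ (x:ℂ) * Complex.exp (-((i.succ : Fin (n+2)) : ℕ) / (x:ℂ)) :=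
        eq_neg_of_add_eq_zero_left hsx
      rw [ha0, norm_neg]
      calc ‖∑ i : Fin (n + 1), a i.succ (x:ℂ) *
              Complex.exp (-((i.succ : Fin (n+2)) : ℕ) / (x:ℂ))‖
          ≤ ∑ i : Fin (n + 1), ‖a i.succ (x:ℂ) *
              Complex.exp (-((i.succ : Fin (n+2)) : ℕ) / (x:ℂ))‖ := norm_sum_le _ _
        _ ≤ ∑ i : Fin (n + 1), Cf i * x⁻¹ ^ N * Real.exp (-x⁻¹) := by
            apply Finset.sum_le_sum
            intro i _
            rw [norm_mul, hexp _ _ hx0']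
            have hk : (1:ℕ) ≤ ((i.succ : Fin (n+2)) : ℕ) := by
              simp [Fin.val_succ]
            have hexple : Real.exp (-(((i.succ : Fin (n+2)) : ℕ) : ℝ) / x) ≤
                Real.exp (-x⁻¹) := by
              apply Real.exp_le_exp.mpr
              rw [neg_div, inv_eq_one_div, neg_le_neg_iff]
              gcongr
              exact_mod_cast hk
            have hpowle : x⁻¹ ^ Nf i ≤ x⁻¹ ^ N :=
              pow_le_pow_right₀ hxinv (Finset.le_sup (Finset.mem_univ i))
            calc ‖a i.succ (x:ℂ)‖ * Real.exp (-(((i.succ : Fin (n+2)) : ℕ) : ℝ) / x)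
                ≤ (Cf i * x⁻¹ ^ Nf i) * Real.exp (-x⁻¹) := by
                  exact mul_le_mul (hbx i) hexple (Real.exp_pos _).le
                    (mul_nonneg (hCpos i) (by positivity))
              _ ≤ Cf i * x⁻¹ ^ N * Real.exp (-x⁻¹) := by
                  apply mul_le_mul_of_nonneg_right _ (Real.exp_pos _).le
                  exact mul_le_mul_of_nonneg_left hpowle (hCpos i)
        _ = C * x⁻¹ ^ N * Real.exp (-x⁻¹) := by
            rw [hC, ← Finset.sum_mul, ← Finset.sum_mul]
    -- divide out one factor of exp(-1/z)
    have hshift : ∀ᶠ z in 𝓝[≠] (0:ℂ),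
        ∑ i : Fin (n + 1), a i.succ z * Complex.exp (-(i : ℕ) / z) = 0 := by
      filter_upwards [hsum, h0, self_mem_nhdsWithin] with z hz h0z hz0
      have hz0' : z ≠ 0 := hz0
      rw [Fin.sum_univ_succ] at hz
      rw [h0z, zero_mul, zero_add] at hz
      calc ∑ i : Fin (n + 1), a i.succ z * Complex.exp (-(i : ℕ) / z)
          = ∑ i : Fin (n + 1), Complex.exp (1 / z) *
              (a i.succ z * Complex.exp (-((i.succ : Fin (n+2)) : ℕ) / z)) := by
            apply Finset.sum_congr rfl
            intro i _
            rw [mul_comm (Complex.exp (1/z)), mul_assoc, ← Complex.exp_add]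
            congr 2
            rw [Fin.val_succ]
            push_cast
            field_simp
            ring
        _ = Complex.exp (1 / z) * ∑ i : Fin (n + 1),
              a i.succ z * Complex.exp (-((i.succ : Fin (n+2)) : ℕ) / z) :=
            (Finset.mul_sum _ _ _).symm
        _ = 0 := by rw [hz, mul_zero]
    have hrest := ih (fun i => a i.succ) (fun i => ha i.succ) hshift
    intro i
    refine Fin.cases h0 (fun j => hrest j) i

/-- `exp (-1/z)` is transcendental over germs of meromorphic functions at `0`:
if `a₀, …, aₙ` (`n ≥ 1`) are meromorphic at `0` and
`∑ i, aᵢ z * exp (-i/z) = 0` on a punctured neighborhood of `0`, then each `aᵢ`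
vanishes on a punctured neighborhood of `0`. -/
theorem exp_neg_inv_transcendental (n : ℕ) (hn : 1 ≤ n) (a : Fin (n + 1) → ℂ → ℂ)
    (ha : ∀ i, MeromorphicAt (a i) 0)
    (hsum : ∀ᶠ z in nhdsWithin 0 {(0 : ℂ)}ᶜ,
      ∑ i : Fin (n + 1), a i z * Complex.exp (-(i : ℕ) / z) = 0) :
    ∀ i, ∀ᶠ z in nhdsWithin 0 {(0 : ℂ)}ᶜ, a i z = 0 :=
  aux_trans n a ha hsum
end

section
/- Let n ≥ 1 and let a₀, a₁, …, aₙ : ℂ → ℂ each be meromorphic at 0. If the identity Σ_{i=0}^{n} aᵢ(z) · exp(i/z) = 0 holds for all z ≠ 0 in some punctured neighborhood of 0 in ℂ, then each aᵢ vanishes on a punctured neighborhood of 0 (equivalently, each aᵢ is the zero germ at 0). -/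
open Filter Topology

lemma seq_tendsto : Tendsto (fun j : ℕ => ((j:ℂ)⁻¹)) atTop (nhdsWithin 0 {(0:ℂ)}ᶜ) := by
  apply tendsto_nhdsWithin_of_tendsto_nhds_of_eventually_within
  · have h1 : Tendsto (fun j : ℕ => ((j:ℝ)⁻¹)) atTop (𝓝 0) :=
      tendsto_inv_atTop_zero.comp tendsto_natCast_atTop_atTop
    have := (Complex.continuous_ofReal.tendsto 0).comp h1
    simpa [Function.comp_def] using this
  · filter_upwards [eventually_ge_atTop 1] with j hj
    simp only [Set.mem_compl_iff, Set.mem_singleton_iff]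
    exact inv_ne_zero (Nat.cast_ne_zero.mpr (by omega))

lemma aux_tendsto {h : ℂ → ℂ} (hh : MeromorphicAt h 0) {d : ℕ} (hd : 1 ≤ d) :
    Tendsto (fun j : ℕ => h ((j:ℂ)⁻¹) * Complex.exp (-(d:ℂ) * j)) atTop (𝓝 0) := by
  rcases eq_or_ne (meromorphicOrderAt h 0) ⊤ with ho | ho
  · have hz := seq_tendsto.eventually (meromorphicOrderAt_eq_top_iff.mp ho)
    apply Tendsto.congr' _ (tendsto_const_nhds (x := (0:ℂ)))
    filter_upwards [hz] with j hj
    simp [hj]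
  · obtain ⟨m, hm⟩ := WithTop.ne_top_iff_exists.mp ho
    obtain ⟨g, hg, hg0, heq⟩ := (meromorphicOrderAt_eq_int_iff hh).mp hm.symm
    have hgc : Tendsto (fun j : ℕ => g ((j:ℂ)⁻¹)) atTop (𝓝 (g 0)) :=
      (hg.continuousAt.tendsto).comp (seq_tendsto.mono_right nhdsWithin_le_nhds)
    have hgb : ∀ᶠ j : ℕ in atTop, ‖g ((j:ℂ)⁻¹)‖ ≤ ‖g 0‖ + 1 := by
      have := (hgc.norm).eventually (eventually_le_nhds (by linarith [norm_nonneg (g 0)] :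
        ‖g 0‖ < ‖g 0‖ + 1))
      exact this
    rw [tendsto_zero_iff_norm_tendsto_zero]
    have hB : Tendsto (fun j : ℕ => (‖g 0‖ + 1) * ((j:ℝ) ^ ((-m : ℤ):ℝ) * Real.exp (-1 * j)))
        atTop (𝓝 0) := by
      have := (tendsto_rpow_mul_exp_neg_mul_atTop_nhds_zero ((-m : ℤ):ℝ) 1 one_pos).comp
        tendsto_natCast_atTop_atTop
      simpa using (this.const_mul (‖g 0‖ + 1))
    apply squeeze_zero' (by filter_upwards with j using norm_nonneg _) _ hB
    filter_upwards [seq_tendsto.eventually heq, hgb, eventually_ge_atTop 1] with j hje hjg hj1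
    have hj0 : (0:ℝ) < (j:ℝ) := by exact_mod_cast Nat.lt_of_lt_of_le Nat.zero_lt_one hj1
    have hne : ‖Complex.exp (-(d:ℂ) * j)‖ = Real.exp (-(d:ℝ) * j) := by
      rw [Complex.norm_exp]
      congr 1
      simp [Complex.mul_re]
    rw [norm_mul, hje, hne]
    rw [sub_zero, smul_eq_mul, norm_mul, norm_zpow]
    have h1 : ‖((j:ℂ)⁻¹)‖ ^ m = (j:ℝ) ^ ((-m : ℤ):ℝ) := by
      rw [Real.rpow_intCast]
      simp [zpow_neg]
    have h2 : Real.exp (-(d:ℝ) * j) ≤ Real.exp (-1 * j) := by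
      apply Real.exp_le_exp.mpr
      have : (1:ℝ) ≤ (d:ℝ) := by exact_mod_cast hd
      nlinarith
    rw [h1]
    calc (j:ℝ) ^ ((-m : ℤ):ℝ) * ‖g ((j:ℂ)⁻¹)‖ * Real.exp (-(d:ℝ) * j)
        ≤ (j:ℝ) ^ ((-m : ℤ):ℝ) * (‖g 0‖ + 1) * Real.exp (-1 * j) := by
          exact mul_le_mul (mul_le_mul_of_nonneg_left hjg (Real.rpow_nonneg hj0.le _))
            h2 (Real.exp_nonneg _) (by positivity)
      _ = (‖g 0‖ + 1) * ((j:ℝ) ^ ((-m : ℤ):ℝ) * Real.exp (-1 * j)) := by ring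

/-- `exp (1/z)` is transcendental over germs of meromorphic functions at `0`:
if `a₀, …, aₙ` (`n ≥ 1`) are meromorphic at `0` and
`∑ i, aᵢ z * exp (i/z) = 0` on a punctured neighborhood of `0`, then each `aᵢ`
vanishes on a punctured neighborhood of `0`. -/
theorem exp_inv_transcendental (n : ℕ) (hn : 1 ≤ n) (a : Fin (n + 1) → ℂ → ℂ)
    (ha : ∀ i, MeromorphicAt (a i) 0)
    (hsum : ∀ᶠ z in nhdsWithin 0 {(0 : ℂ)}ᶜ,
      ∑ i : Fin (n + 1), a i z * Complex.exp ((i : ℕ) / z) = 0) :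
    ∀ i, ∀ᶠ z in nhdsWithin 0 {(0 : ℂ)}ᶜ, a i z = 0 := by
  by_contra hcon
  push_neg at hcon
  obtain ⟨i₀, hi₀⟩ := hcon
  classical
  set S := Finset.univ.filter
    (fun i : Fin (n+1) => ¬ ∀ᶠ z in nhdsWithin 0 {(0:ℂ)}ᶜ, a i z = 0) with hS
  have hSne : S.Nonempty := ⟨i₀, Finset.mem_filter.mpr ⟨Finset.mem_univ _, Filter.not_eventually.mpr hi₀⟩⟩
  set k := S.max' hSne with hk
  have hkS : k ∈ S := S.max'_mem hSne
  have hknz : ¬ ∀ᶠ z in nhdsWithin 0 {(0:ℂ)}ᶜ, a k z = 0 :=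
    (Finset.mem_filter.mp hkS).2
  have hgt : ∀ i : Fin (n+1), k < i → ∀ᶠ z in nhdsWithin 0 {(0:ℂ)}ᶜ, a i z = 0 := by
    intro i hi
    by_contra hne
    exact absurd (S.le_max' i (Finset.mem_filter.mpr ⟨Finset.mem_univ _, hne⟩))
      (not_le.mpr hi)
  have hoT : meromorphicOrderAt (a k) 0 ≠ ⊤ := fun h => hknz (meromorphicOrderAt_eq_top_iff.mp h)
  obtain ⟨m, hm⟩ := WithTop.ne_top_iff_exists.mp hoT
  obtain ⟨g, hg, hg0, heq⟩ := (meromorphicOrderAt_eq_int_iff (ha k)).mp hm.symm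
  -- the rescaled terms
  set c : Fin (n+1) → ℕ → ℂ := fun i j =>
    ((j:ℂ))^m * a i ((j:ℂ)⁻¹) * Complex.exp (((i:ℕ):ℂ) / ((j:ℂ)⁻¹)) *
      Complex.exp (-((k:ℕ):ℂ) * j) with hc
  -- the sum is eventually zero
  have hzero : ∀ᶠ j : ℕ in atTop, ∑ i : Fin (n+1), c i j = 0 := by
    filter_upwards [seq_tendsto.eventually hsum] with j hj
    have : ∑ i : Fin (n+1), c i j =
        (∑ i : Fin (n+1), a i ((j:ℂ)⁻¹) * Complex.exp (((i:ℕ):ℂ) / ((j:ℂ)⁻¹))) *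
          (((j:ℂ))^m * Complex.exp (-((k:ℕ):ℂ) * j)) := by
      rw [Finset.sum_mul]
      exact Finset.sum_congr rfl (fun i _ => by simp only [hc]; ring)
    rw [this, hj, zero_mul]
  -- the sum tends to g 0
  have hlim : Tendsto (fun j : ℕ => ∑ i : Fin (n+1), c i j) atTop (𝓝 (g 0)) := by
    have : (g 0) = ∑ i : Fin (n+1), (if i = k then g 0 else 0) := by simp
    rw [this]
    apply tendsto_finset_sum
    intro i _
    rcases lt_trichotomy i k with hik | hik | hik
    · -- i < k : decaying term
      simp only [if_neg hik.ne]
      set d : ℕ := (k:ℕ) - (i:ℕ) with hd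
      have hd1 : 1 ≤ d := by
        have : (i:ℕ) < (k:ℕ) := hik
        omega
      have hmero : MeromorphicAt (fun z : ℂ => z ^ (-m) * a i z) 0 := by
        have h1 : MeromorphicAt ((fun z : ℂ => z) ^ (-m)) 0 := (MeromorphicAt.id 0).zpow (-m)
        have h2 := h1.mul (ha i)
        apply h2.congr
        filter_upwards with z
        simp [Pi.pow_apply]
      have := aux_tendsto hmero hd1
      apply Tendsto.congr' _ this
      filter_upwards [eventually_ge_atTop 1] with j hj
      have hjne : ((j:ℂ)) ≠ 0 := Nat.cast_ne_zero.mpr (by omega)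
      have e1 : (((j:ℂ))⁻¹) ^ (-m) = ((j:ℂ))^m := by
        rw [zpow_neg, inv_zpow, inv_inv]
      have E : Complex.exp (-((d:ℕ):ℂ) * j)
          = Complex.exp ((((i:ℕ):ℂ)) / ((j:ℂ)⁻¹)) * Complex.exp (-((k:ℕ):ℂ) * j) := by
        rw [← Complex.exp_add]
        congr 1
        rw [div_eq_mul_inv, inv_inv]
        have hdc : ((d:ℕ):ℂ) = ((k:ℕ):ℂ) - ((i:ℕ):ℂ) := by
          rw [hd]
          push_cast [Nat.cast_sub (le_of_lt hik)]
          ring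
        rw [hdc]; ring
      show ((j:ℂ)⁻¹) ^ (-m) * a i ((j:ℂ)⁻¹) * Complex.exp (-((d:ℕ):ℂ) * j) = c i j
      simp only [hc]
      rw [e1, E]
      ring
    · -- i = k : tends to g 0
      simp only [hik, if_pos rfl]
      have hgc : Tendsto (fun j : ℕ => g ((j:ℂ)⁻¹)) atTop (𝓝 (g 0)) :=
        (hg.continuousAt.tendsto).comp (seq_tendsto.mono_right nhdsWithin_le_nhds)
      apply Tendsto.congr' _ hgc
      filter_upwards [seq_tendsto.eventually heq, eventually_ge_atTop 1] with j hje hj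
      have hjne : ((j:ℂ)) ≠ 0 := Nat.cast_ne_zero.mpr (by omega)
      have E : Complex.exp ((((k:ℕ):ℂ)) / ((j:ℂ)⁻¹)) * Complex.exp (-((k:ℕ):ℂ) * j) = 1 := by
        rw [← Complex.exp_add, div_eq_mul_inv, inv_inv,
          show ((k:ℕ):ℂ) * j + -((k:ℕ):ℂ) * j = 0 by ring, Complex.exp_zero]
      have P : ((j:ℂ))^m * ((j:ℂ)⁻¹)^m = 1 := by
        rw [inv_zpow, mul_inv_cancel₀ (zpow_ne_zero m hjne)]
      show g ((j:ℂ)⁻¹) = c k j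
      calc g ((j:ℂ)⁻¹)
          = (((j:ℂ))^m * ((j:ℂ)⁻¹)^m) *
              (Complex.exp ((((k:ℕ):ℂ)) / ((j:ℂ)⁻¹)) * Complex.exp (-((k:ℕ):ℂ) * j)) *
              g ((j:ℂ)⁻¹) := by rw [E, P]; ring
        _ = c k j := by
              simp only [hc]
              rw [hje, sub_zero, smul_eq_mul]
              ring
    · -- i > k : eventually zero
      simp only [if_neg hik.ne']
      apply Tendsto.congr' _ (tendsto_const_nhds (x := (0:ℂ)))
      filter_upwards [seq_tendsto.eventually (hgt i hik)] with j hj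
      simp only [hc]
      simp [hj]
  have : g 0 = 0 :=
    tendsto_nhds_unique (hlim.congr' hzero) tendsto_const_nhds
  exact hg0 this
end

section
/- Let p, q ∈ ℂ[X] be polynomials with q ≠ 0. Suppose there exists a function h : ℂ → ℂ meromorphic at 0 such that h(u) · q(u · exp(-1/u)) = p(u · exp(-1/u)) for all u ≠ 0 in some punctured neighborhood of 0 in ℂ. Then the rational function p/q is constant, i.e., there exists c ∈ ℂ with p = c · q. -/
open Polynomial Filter Complex

/-! Auxiliary sequence: `useq n = 1/n` in `ℂ`, along which `u * exp (-1/u)` takes the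
real values `wseq n = (1/n) * exp (-n)`. -/

noncomputable def useq (n : ℕ) : ℂ := ((n : ℂ))⁻¹

noncomputable def wseq (n : ℕ) : ℝ := (n : ℝ)⁻¹ * Real.exp (-(n : ℝ))

lemma useq_eq_ofReal (n : ℕ) : useq n = (((n : ℝ)⁻¹ : ℝ) : ℂ) := by
  simp [useq]

lemma useq_ne {n : ℕ} (hn : 1 ≤ n) : useq n ≠ 0 := by
  simp only [useq, ne_eq, inv_eq_zero, Nat.cast_eq_zero]
  omega

lemma useq_tendsto_nhds : Filter.Tendsto useq atTop (nhds (0 : ℂ)) := by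
  have h1 : Filter.Tendsto (fun n : ℕ => (n : ℝ)⁻¹) atTop (nhds 0) :=
    tendsto_inv_atTop_zero.comp tendsto_natCast_atTop_atTop
  have h2 := (Complex.continuous_ofReal.tendsto 0).comp h1
  have h3 : Filter.Tendsto useq atTop (nhds ((0:ℝ) : ℂ)) :=
    h2.congr fun n => (useq_eq_ofReal n).symm
  simpa using h3

lemma useq_tendsto : Filter.Tendsto useq atTop (nhdsWithin 0 {(0 : ℂ)}ᶜ) := by
  refine tendsto_nhdsWithin_of_tendsto_nhds_of_eventually_within _ useq_tendsto_nhds ?_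
  filter_upwards [Filter.eventually_ge_atTop 1] with n hn
  simpa using useq_ne hn

lemma wseq_pos {n : ℕ} (hn : 1 ≤ n) : 0 < wseq n := by
  have : (0 : ℝ) < (n : ℝ) := by exact_mod_cast hn
  exact mul_pos (inv_pos.mpr this) (Real.exp_pos _)

lemma wseq_nonneg (n : ℕ) : 0 ≤ wseq n := by
  rcases Nat.eq_zero_or_pos n with h | h
  · simp [wseq, h]
  · exact (wseq_pos h).le

lemma wseq_le_one {n : ℕ} (hn : 1 ≤ n) : wseq n ≤ 1 := by
  have h1 : (1 : ℝ) ≤ (n : ℝ) := by exact_mod_cast hn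
  have h2 : (n : ℝ)⁻¹ ≤ 1 := inv_le_one_of_one_le₀ h1
  have h3 : Real.exp (-(n : ℝ)) ≤ 1 := Real.exp_le_one_iff.mpr (by linarith)
  calc wseq n ≤ 1 * 1 := mul_le_mul h2 h3 (Real.exp_pos _).le zero_le_one
  _ = 1 := by ring

lemma wseq_eq {n : ℕ} (hn : 1 ≤ n) :
    useq n * Complex.exp (-1 / useq n) = ((wseq n : ℝ) : ℂ) := by
  have hn0 : ((n : ℂ)) ≠ 0 := by
    simp only [ne_eq, Nat.cast_eq_zero]; omega
  have h1 : -1 / useq n = -(n : ℂ) := by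
    rw [useq]; field_simp
  rw [h1, wseq, useq_eq_ofReal]
  push_cast
  ring

lemma wseq_strict_anti {m n : ℕ} (hm : 1 ≤ m) (hmn : m < n) : wseq n < wseq m := by
  have hmR : (0 : ℝ) < (m : ℝ) := by exact_mod_cast hm
  have hmnR : (m : ℝ) < (n : ℝ) := by exact_mod_cast hmn
  have h1 : (n : ℝ)⁻¹ < (m : ℝ)⁻¹ := by
    apply inv_strictAnti₀ hmR hmnR
  have h2 : Real.exp (-(n : ℝ)) < Real.exp (-(m : ℝ)) := by
    apply Real.exp_lt_exp.mpr; linarith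
  exact mul_lt_mul'' h1 h2 (by positivity) (Real.exp_pos _).le

lemma decay (k : ℕ) :
    Filter.Tendsto (fun n : ℕ => (n : ℝ) ^ k * wseq n) atTop (nhds 0) := by
  have h1 : Filter.Tendsto (fun n : ℕ => (n : ℝ) ^ k * Real.exp (-(n : ℝ))) atTop (nhds 0) :=
    (Real.tendsto_pow_mul_exp_neg_atTop_nhds_zero k).comp tendsto_natCast_atTop_atTop
  apply squeeze_zero' (g := fun n : ℕ => (n : ℝ) ^ k * Real.exp (-(n : ℝ)))
  · filter_upwards with n
    exact mul_nonneg (by positivity) (wseq_nonneg n)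
  · filter_upwards [Filter.eventually_ge_atTop 1] with n hn
    have h1R : (1 : ℝ) ≤ (n : ℝ) := by exact_mod_cast hn
    have : (n : ℝ)⁻¹ ≤ 1 := inv_le_one_of_one_le₀ h1R
    rw [wseq, ← mul_assoc]
    have hp : (0 : ℝ) ≤ (n : ℝ) ^ k := by positivity
    have h2 : (n : ℝ) ^ k * (n : ℝ)⁻¹ ≤ (n : ℝ) ^ k := by nlinarith
    have h3 := mul_le_mul_of_nonneg_right h2 (Real.exp_pos (-(n : ℝ))).le
    linarith
  · exact h1

lemma poly_zero (r : Polynomial ℂ)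
    (hr : ∀ᶠ n in atTop, r.eval ((wseq n : ℝ) : ℂ) = 0) : r = 0 := by
  obtain ⟨N, hN⟩ := Filter.eventually_atTop.mp hr
  apply Polynomial.eq_zero_of_infinite_isRoot
  apply Set.infinite_of_injective_forall_mem
    (f := fun k : ℕ => ((wseq (max N 1 + k) : ℝ) : ℂ))
  · intro i j hij
    by_contra hne
    wlog hlt : i < j generalizing i j
    · exact this hij.symm (Ne.symm hne) (by omega)
    have hanti := wseq_strict_anti (m := max N 1 + i) (n := max N 1 + j) (by omega) (by omega)
    rw [Complex.ofReal_inj] at hij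
    linarith
  · intro k
    exact hN _ (by omega)

/-- Superpolynomial decay along `useq` forces a meromorphic function to vanish. -/
lemma wseq_tendsto : Filter.Tendsto (fun n : ℕ => ((wseq n : ℝ) : ℂ)) atTop (nhds 0) := by
  have h1 : Filter.Tendsto wseq atTop (nhds 0) := by
    have h2 := decay 0
    simpa using h2
  have h3 := (Complex.continuous_ofReal.tendsto 0).comp h1
  simpa [Function.comp_def] using h3

lemma super (f : ℂ → ℂ) (hf : MeromorphicAt f 0) (B : ℝ)
    (hb : ∀ᶠ n in atTop, norm (f (useq n)) ≤ B * wseq n) :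
    ∀ᶠ z in nhdsWithin 0 {(0 : ℂ)}ᶜ, f z = 0 := by
  rw [← meromorphicOrderAt_eq_top_iff]
  by_contra ho
  obtain ⟨m, hm⟩ := WithTop.ne_top_iff_exists.mp ho
  obtain ⟨g, hg, hg0, hfg⟩ := (meromorphicOrderAt_eq_int_iff hf).mp hm.symm
  set k := m.natAbs with hk
  have hmk : m ≤ (k : ℤ) := Int.le_natAbs
  have hgt : Filter.Tendsto (fun n => norm (g (useq n))) atTop
      (nhds (norm (g 0))) := by
    have := (continuous_norm.tendsto (g 0)).comp
      ((hg.continuousAt.tendsto).comp (useq_tendsto.mono_right nhdsWithin_le_nhds))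
    simpa [Function.comp_def] using this
  have hpos : 0 < norm (g 0) := by
    simpa using hg0
  have hge : ∀ᶠ n in atTop, norm (g 0) / 2 ≤ norm (g (useq n)) :=
    hgt.eventually_const_le (by linarith)
  have hev : ∀ᶠ n in atTop, f (useq n) = (useq n) ^ m * g (useq n) := by
    filter_upwards [useq_tendsto.eventually hfg] with n hn
    simpa using hn
  have key : ∀ᶠ n : ℕ in atTop,
      norm (g 0) / 2 ≤ (n : ℝ) ^ k * (B * wseq n) := by
    filter_upwards [hev, hge, hb, Filter.eventually_ge_atTop 1] with n h1 h2 h3 h4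
    have hnR : (1 : ℝ) ≤ (n : ℝ) := by exact_mod_cast h4
    have hnpos : (0 : ℝ) < (n : ℝ) := by linarith
    have habs : norm (f (useq n)) = ((n : ℝ)⁻¹) ^ m * norm (g (useq n)) := by
      rw [h1, norm_mul, norm_zpow, useq]
      simp
    have ht : (0 : ℝ) < ((n : ℝ)) ^ m := zpow_pos hnpos m
    have h5 : ((n : ℝ)⁻¹) ^ m * (norm (g 0) / 2) ≤ B * wseq n := by
      calc ((n : ℝ)⁻¹) ^ m * (norm (g 0) / 2)
          ≤ ((n : ℝ)⁻¹) ^ m * norm (g (useq n)) := by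
            apply mul_le_mul_of_nonneg_left h2 (zpow_pos (by positivity) m).le
        _ = norm (f (useq n)) := habs.symm
        _ ≤ B * wseq n := h3
    rw [inv_zpow, ← zpow_neg] at h5
    have h6 : norm (g 0) / 2 ≤ (n : ℝ) ^ m * (B * wseq n) := by
      rw [← inv_mul_le_iff₀ ht]
      rw [zpow_neg] at h5
      exact h5
    calc norm (g 0) / 2 ≤ (n : ℝ) ^ m * (B * wseq n) := h6
      _ ≤ (n : ℝ) ^ k * (B * wseq n) := by
          apply mul_le_mul_of_nonneg_right _ _
          · rw [← zpow_natCast (n : ℝ) k]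
            exact zpow_le_zpow_right₀ hnR hmk
          · have : 0 < (n:ℝ) ^ m * (B * wseq n) := lt_of_lt_of_le (by linarith) h6
            nlinarith [zpow_pos hnpos m]
  have hlim : Filter.Tendsto (fun n : ℕ => (n : ℝ) ^ k * (B * wseq n)) atTop (nhds 0) := by
    have := (decay k).const_mul B
    simpa [mul_comm, mul_assoc, mul_left_comm] using this
  have : norm (g 0) / 2 ≤ 0 := ge_of_tendsto hlim key
  linarith


/-- If `f (useq n) * (w^b * B(w)) = w^a * A(w)` along the sequence `w = wseq n`, with
`b < a` and `A 0, B 0 ≠ 0`, then the meromorphic `f` vanishes near `0`. -/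
lemma aux_vanish (A B : Polynomial ℂ) (a b : ℕ) (hab : b < a)
    (hA0 : A.eval 0 ≠ 0) (hB0 : B.eval 0 ≠ 0)
    (f : ℂ → ℂ) (hf : MeromorphicAt f 0)
    (hrel : ∀ᶠ n : ℕ in atTop,
      f (useq n) * (((wseq n : ℝ) : ℂ) ^ b * B.eval ((wseq n : ℝ) : ℂ))
        = ((wseq n : ℝ) : ℂ) ^ a * A.eval ((wseq n : ℝ) : ℂ)) :
    ∀ᶠ z in nhdsWithin 0 {(0 : ℂ)}ᶜ, f z = 0 := by
  have hAe : Filter.Tendsto (fun n : ℕ => norm (A.eval ((wseq n : ℝ) : ℂ))) atTop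
      (nhds (norm (A.eval 0))) := by
    have := ((continuous_norm.comp A.continuous).tendsto 0).comp wseq_tendsto
    simpa [Function.comp_def] using this
  have hBe : Filter.Tendsto (fun n : ℕ => norm (B.eval ((wseq n : ℝ) : ℂ))) atTop
      (nhds (norm (B.eval 0))) := by
    have := ((continuous_norm.comp B.continuous).tendsto 0).comp wseq_tendsto
    simpa [Function.comp_def] using this
  have hBpos : 0 < norm (B.eval 0) := by simpa using hB0
  set M : ℝ := norm (A.eval 0) + 1 with hM
  set d : ℝ := norm (B.eval 0) / 2 with hd
  have hdpos : 0 < d := by positivity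
  have hAb : ∀ᶠ n : ℕ in atTop,
      norm (A.eval ((wseq n : ℝ) : ℂ)) ≤ M := hAe.eventually_le_const (lt_add_one _)
  have hBb : ∀ᶠ n : ℕ in atTop,
      d ≤ norm (B.eval ((wseq n : ℝ) : ℂ)) :=
    hBe.eventually_const_le (by rw [hd]; linarith)
  apply super f hf (M / d)
  filter_upwards [hrel, hAb, hBb, Filter.eventually_ge_atTop 1] with n h1 h2 h3 h4
  have hwpos : 0 < wseq n := wseq_pos h4
  have hwle : wseq n ≤ 1 := wseq_le_one h4
  have habsw : norm ((wseq n : ℝ) : ℂ) = wseq n := by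
    rw [Complex.norm_real, Real.norm_eq_abs, _root_.abs_of_nonneg (wseq_nonneg n)]
  have habs := congrArg norm h1
  simp only [norm_mul, norm_pow, habsw] at habs
  set x : ℝ := norm (f (useq n)) with hx
  set e : ℝ := norm (B.eval ((wseq n : ℝ) : ℂ)) with he
  set aA : ℝ := norm (A.eval ((wseq n : ℝ) : ℂ)) with haA
  set t : ℝ := wseq n ^ b with ht
  have htpos : 0 < t := pow_pos hwpos b
  have hpow : wseq n ^ a ≤ t * wseq n := by
    have h5 : a = b + (a - b) := by omega
    rw [h5, pow_add, ht]
    apply mul_le_mul_of_nonneg_left _ (pow_nonneg (wseq_nonneg n) b)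
    calc wseq n ^ (a - b) ≤ wseq n ^ 1 :=
          pow_le_pow_of_le_one (wseq_nonneg n) hwle (by omega)
      _ = wseq n := pow_one _
  have h6 : t * (x * e) ≤ t * (wseq n * M) := by
    calc t * (x * e) = x * (t * e) := by ring
      _ = wseq n ^ a * aA := habs
      _ ≤ (t * wseq n) * M := by
          apply mul_le_mul hpow h2 (norm_nonneg _) (by positivity)
      _ = t * (wseq n * M) := by ring
  have h7 : x * e ≤ wseq n * M := le_of_mul_le_mul_left h6 htpos
  have h8 : x * d ≤ x * e := mul_le_mul_of_nonneg_left h3 (norm_nonneg _)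
  rw [div_mul_eq_mul_div, le_div_iff₀ hdpos]
  calc x * d ≤ wseq n * M := le_trans h8 h7
    _ = M * wseq n := by ring

/-- If a rational function `p/q` of `u * exp (-1/u)` extends meromorphically through
`u = 0`, then `p/q` is constant. -/
theorem rational_of_mul_exp_neg_inv_constant (p q : Polynomial ℂ) (hq : q ≠ 0)
    (h : ℂ → ℂ) (hh : MeromorphicAt h 0)
    (heq : ∀ᶠ u in nhdsWithin 0 {(0 : ℂ)}ᶜ,
      h u * q.eval (u * Complex.exp (-1 / u)) = p.eval (u * Complex.exp (-1 / u))) :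
    ∃ c : ℂ, p = Polynomial.C c * q := by
  by_cases hp : p = 0
  · exact ⟨0, by simp [hp]⟩
  have hseq : ∀ᶠ n : ℕ in atTop,
      h (useq n) * q.eval ((wseq n : ℝ) : ℂ) = p.eval ((wseq n : ℝ) : ℂ) := by
    filter_upwards [useq_tendsto.eventually heq, Filter.eventually_ge_atTop 1] with n hn h1
    rwa [wseq_eq h1] at hn
  obtain ⟨P, hPf, hPd⟩ := p.exists_eq_pow_rootMultiplicity_mul_and_not_dvd hp 0
  obtain ⟨Q, hQf, hQd⟩ := q.exists_eq_pow_rootMultiplicity_mul_and_not_dvd hq 0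
  set a := p.rootMultiplicity 0 with haa
  set b := q.rootMultiplicity 0 with hbb
  have hP0 : P.eval 0 ≠ 0 := fun h0 => hPd (Polynomial.dvd_iff_isRoot.mpr h0)
  have hQ0 : Q.eval 0 ≠ 0 := fun h0 => hQd (Polynomial.dvd_iff_isRoot.mpr h0)
  have hpe : ∀ z : ℂ, p.eval z = z ^ a * P.eval z := by
    intro z
    conv_lhs => rw [hPf]
    simp
  have hqe : ∀ z : ℂ, q.eval z = z ^ b * Q.eval z := by
    intro z
    conv_lhs => rw [hQf]
    simp
  have hrel : ∀ᶠ n : ℕ in atTop,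
      h (useq n) * (((wseq n : ℝ) : ℂ) ^ b * Q.eval ((wseq n : ℝ) : ℂ))
        = ((wseq n : ℝ) : ℂ) ^ a * P.eval ((wseq n : ℝ) : ℂ) := by
    filter_upwards [hseq] with n h1
    rw [← hpe, ← hqe]
    exact h1
  have hPe : Filter.Tendsto (fun n : ℕ => P.eval ((wseq n : ℝ) : ℂ)) atTop
      (nhds (P.eval 0)) := by
    have := (P.continuous.tendsto 0).comp wseq_tendsto
    simpa [Function.comp_def] using this
  have hQe : Filter.Tendsto (fun n : ℕ => Q.eval ((wseq n : ℝ) : ℂ)) atTop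
      (nhds (Q.eval 0)) := by
    have := (Q.continuous.tendsto 0).comp wseq_tendsto
    simpa [Function.comp_def] using this
  have hPne : ∀ᶠ n : ℕ in atTop, P.eval ((wseq n : ℝ) : ℂ) ≠ 0 := hPe.eventually_ne hP0
  have hQne : ∀ᶠ n : ℕ in atTop, Q.eval ((wseq n : ℝ) : ℂ) ≠ 0 := hQe.eventually_ne hQ0
  have hwC : ∀ᶠ n : ℕ in atTop, ((wseq n : ℝ) : ℂ) ≠ 0 := by
    filter_upwards [Filter.eventually_ge_atTop 1] with n hn
    exact_mod_cast (wseq_pos hn).ne'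
  have key : ∃ c : ℂ, ∀ᶠ z in nhdsWithin 0 {(0 : ℂ)}ᶜ, h z = c := by
    rcases lt_trichotomy a b with hab | hab | hab
    · -- a < b: impossible; apply `aux_vanish` to `h⁻¹`
      exfalso
      have hhne : ∀ᶠ n : ℕ in atTop, h (useq n) ≠ 0 := by
        filter_upwards [hrel, hPne, hwC] with n h1 h2 h3 h0
        rw [h0, zero_mul] at h1
        rcases mul_eq_zero.mp h1.symm with hc | hc
        · exact pow_ne_zero a h3 hc
        · exact h2 hc
      have hrel' : ∀ᶠ n : ℕ in atTop,
          h⁻¹ (useq n) * (((wseq n : ℝ) : ℂ) ^ a * P.eval ((wseq n : ℝ) : ℂ))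
            = ((wseq n : ℝ) : ℂ) ^ b * Q.eval ((wseq n : ℝ) : ℂ) := by
        filter_upwards [hrel, hhne] with n h1 h2
        rw [Pi.inv_apply, ← h1]
        field_simp
      have hvan := aux_vanish Q P b a hab hQ0 hP0 h⁻¹ hh.inv hrel'
      have := useq_tendsto.eventually hvan
      rw [Filter.eventually_atTop] at this hhne
      obtain ⟨N1, hN1⟩ := this
      obtain ⟨N2, hN2⟩ := hhne
      have h1 := hN1 (max N1 N2) (le_max_left _ _)
      have h2 := hN2 (max N1 N2) (le_max_right _ _)
      rw [Pi.inv_apply, inv_eq_zero] at h1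
      exact h2 h1
    · -- a = b: `h` tends to `c = P 0 / Q 0` superpolynomially fast
      set c : ℂ := P.eval 0 / Q.eval 0 with hc
      refine ⟨c, ?_⟩
      set R : Polynomial ℂ := Polynomial.C (Q.eval 0) * P - Polynomial.C (P.eval 0) * Q
        with hR
      set S : Polynomial ℂ := R.divX with hS
      have hRX : R = Polynomial.X * S := by
        have h0 : R.coeff 0 = 0 := by
          rw [Polynomial.coeff_zero_eq_eval_zero]
          simp only [hR, Polynomial.eval_sub, Polynomial.eval_mul, Polynomial.eval_C]
          ring
        conv_lhs => rw [← Polynomial.X_mul_divX_add R]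
        rw [h0]
        simp [hS]
      have hSe : Filter.Tendsto (fun n : ℕ => norm (S.eval ((wseq n : ℝ) : ℂ)))
          atTop (nhds (norm (S.eval 0))) := by
        have := ((continuous_norm.comp S.continuous).tendsto 0).comp wseq_tendsto
        simpa [Function.comp_def] using this
      have hQa : Filter.Tendsto (fun n : ℕ => norm (Q.eval ((wseq n : ℝ) : ℂ)))
          atTop (nhds (norm (Q.eval 0))) := by
        have := ((continuous_norm.comp Q.continuous).tendsto 0).comp wseq_tendsto
        simpa [Function.comp_def] using this
      have hQpos : 0 < norm (Q.eval 0) := by simpa using hQ0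
      set q0 : ℝ := norm (Q.eval 0) with hq0
      set M : ℝ := norm (S.eval 0) + 1 with hM
      have hSb : ∀ᶠ n : ℕ in atTop,
          norm (S.eval ((wseq n : ℝ) : ℂ)) ≤ M := hSe.eventually_le_const (lt_add_one _)
      have hQb : ∀ᶠ n : ℕ in atTop,
          q0 / 2 ≤ norm (Q.eval ((wseq n : ℝ) : ℂ)) :=
        hQa.eventually_const_le (by rw [hq0]; linarith)
      have hcQ : c * Q.eval 0 = P.eval 0 := div_mul_cancel₀ _ hQ0
      have hd2 : (0 : ℝ) < q0 ^ 2 / 2 := by positivity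
      have hvan : ∀ᶠ z in nhdsWithin 0 {(0 : ℂ)}ᶜ, h z - c = 0 := by
        apply super (fun z => h z - c) (hh.sub (MeromorphicAt.const c 0)) (M / (q0 ^ 2 / 2))
        filter_upwards [hrel, hQne, hwC, hSb, hQb, Filter.eventually_ge_atTop 1]
          with n h1 h2 h3 h4 h5 h6
        have hwpos : 0 < wseq n := wseq_pos h6
        rw [← hab] at h1
        have hcan : ((wseq n : ℝ) : ℂ) ^ a * (h (useq n) * Q.eval ((wseq n : ℝ) : ℂ))
            = ((wseq n : ℝ) : ℂ) ^ a * P.eval ((wseq n : ℝ) : ℂ) := by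
          linear_combination h1
        have hu_eq := mul_left_cancel₀ (pow_ne_zero a h3) hcan
        have heq2 : (h (useq n) - c) * (Q.eval ((wseq n : ℝ) : ℂ) * Q.eval 0)
            = R.eval ((wseq n : ℝ) : ℂ) := by
          simp only [hR, Polynomial.eval_sub, Polynomial.eval_mul, Polynomial.eval_C]
          linear_combination Q.eval 0 * hu_eq - Q.eval ((wseq n : ℝ) : ℂ) * hcQ
        rw [hRX] at heq2
        have habs := congrArg norm heq2
        simp only [norm_mul, Polynomial.eval_mul, Polynomial.eval_X, Complex.norm_real, Real.norm_eq_abs] at habs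
        rw [_root_.abs_of_nonneg (wseq_nonneg n)] at habs
        set x : ℝ := norm (h (useq n) - c) with hx
        set e : ℝ := norm (Q.eval ((wseq n : ℝ) : ℂ)) with he
        set s : ℝ := norm (S.eval ((wseq n : ℝ) : ℂ)) with hs
        have hxnn : 0 ≤ x := norm_nonneg _
        have h7 : x * (q0 ^ 2 / 2) ≤ x * (e * q0) := by
          apply mul_le_mul_of_nonneg_left _ hxnn
          nlinarith
        have h8 : x * (e * q0) = wseq n * s := by rw [hq0]; exact habs
        have h9 : wseq n * s ≤ wseq n * M := mul_le_mul_of_nonneg_left h4 (wseq_nonneg n)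
        rw [div_mul_eq_mul_div, le_div_iff₀ hd2]
        clear_value x e s q0 M
        calc x * (q0 ^ 2 / 2) ≤ wseq n * M := by linarith
          _ = M * wseq n := by ring
      filter_upwards [hvan] with z hz
      exact sub_eq_zero.mp hz
    · -- b < a: impossible
      exfalso
      have hvan := aux_vanish P Q a b hab hP0 hQ0 h hh hrel
      have := useq_tendsto.eventually hvan
      rw [Filter.eventually_atTop] at this
      obtain ⟨N1, hN1⟩ := this
      rw [Filter.eventually_atTop] at hrel hPne hwC
      obtain ⟨N2, hN2⟩ := hrel
      obtain ⟨N3, hN3⟩ := hPne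
      obtain ⟨N4, hN4⟩ := hwC
      set n := max (max N1 N2) (max N3 N4)
      have h1 := hN2 n (by omega)
      rw [hN1 n (by omega), zero_mul] at h1
      rcases mul_eq_zero.mp h1.symm with hc | hc
      · exact pow_ne_zero a (hN4 n (by omega)) hc
      · exact hN3 n (by omega) hc
  obtain ⟨c, hcv⟩ := key
  refine ⟨c, ?_⟩
  have hz : ∀ᶠ n : ℕ in atTop, (p - Polynomial.C c * q).eval ((wseq n : ℝ) : ℂ) = 0 := by
    filter_upwards [hseq, useq_tendsto.eventually hcv] with n h1 h2
    rw [h2] at h1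
    simp only [Polynomial.eval_sub, Polynomial.eval_mul, Polynomial.eval_C]
    linear_combination -h1
  have hfin := poly_zero _ hz
  have := sub_eq_zero.mp hfin
  exact this
end

section
/- Let p, q ∈ ℂ[X] be polynomials with q ≠ 0. Suppose there exists a function h : ℂ → ℂ meromorphic at 0 such that h(u) · q(u⁻¹ · exp(1/u)) = p(u⁻¹ · exp(1/u)) for all u ≠ 0 in some punctured neighborhood of 0 in ℂ. Then the rational function p/q is constant, i.e., there exists c ∈ ℂ with p = c · q. -/
open Filter Topology

open Polynomial

private lemma expA (j : ℤ) : Filter.Tendsto (fun y : ℝ => Real.exp y * y ^ j) atTop atTop := by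
  rcases le_or_gt 0 j with hj | hj
  · refine tendsto_atTop_mono' _ ?_ Real.tendsto_exp_atTop
    filter_upwards [eventually_ge_atTop (1 : ℝ)] with y hy
    nth_rewrite 1 [← mul_one (Real.exp y)]
    exact mul_le_mul_of_nonneg_left (one_le_zpow₀ hy hj) (Real.exp_pos y).le
  · refine (Real.tendsto_exp_div_pow_atTop (-j).toNat).congr' ?_
    filter_upwards [eventually_gt_atTop (0 : ℝ)] with y hy
    rw [div_eq_mul_inv, ← zpow_natCast, ← zpow_neg, Int.toNat_of_nonneg (by omega), neg_neg]

private lemma expB (k : ℤ) :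
    Filter.Tendsto (fun x : ℝ => x ^ k * (Real.exp (1 / x) / x)) (𝓝[>] (0 : ℝ)) atTop := by
  refine ((expA (1 - k)).comp tendsto_inv_nhdsGT_zero).congr' ?_
  filter_upwards [self_mem_nhdsWithin] with x (hx : 0 < x)
  have hx0 : x ≠ 0 := hx.ne'
  simp only [Function.comp]
  rw [one_div, inv_zpow, ← zpow_neg, neg_sub, div_eq_mul_inv, zpow_sub_one₀ hx0]
  ring

private lemma polyC_aux (c : ℕ → ℂ) (d : ℕ) :
    Filter.Tendsto
      (fun t : ℝ => (∑ i ∈ Finset.range (d + 1), c i * (t : ℂ) ^ i) * ((t : ℂ) ^ d)⁻¹)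
      atTop (𝓝 (c d)) := by
  have key : ∀ i ∈ Finset.range (d + 1),
      Filter.Tendsto (fun t : ℝ => c i * ((t : ℂ) ^ i * ((t : ℂ) ^ d)⁻¹)) atTop
        (𝓝 (if i = d then c d else 0)) := by
    intro i hi
    rcases eq_or_ne i d with h | hne
    · subst h
      rw [if_pos rfl]
      have hev : ∀ᶠ t : ℝ in atTop, c i = c i * ((t : ℂ) ^ i * ((t : ℂ) ^ i)⁻¹) := by
        filter_upwards [eventually_gt_atTop (0 : ℝ)] with t ht
        have h0 : (t : ℂ) ≠ 0 := by exact_mod_cast ht.ne'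
        rw [mul_inv_cancel₀ (pow_ne_zero _ h0), mul_one]
      exact tendsto_const_nhds.congr' hev
    · have hi' : i < d := by simp only [Finset.mem_range] at hi; omega
      rw [if_neg hne]
      have hre : Filter.Tendsto (fun t : ℝ => t ^ ((i : ℤ) - d)) atTop (𝓝 (0 : ℝ)) :=
        tendsto_zpow_atTop_zero (by omega)
      have hco : Filter.Tendsto (fun t : ℝ => ((t ^ ((i : ℤ) - d) : ℝ) : ℂ)) atTop
          (𝓝 (0 : ℂ)) := by
        exact_mod_cast (Complex.continuous_ofReal.tendsto 0).comp hre
      have hev : ∀ᶠ t : ℝ in atTop,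
          ((t ^ ((i : ℤ) - d) : ℝ) : ℂ) = (t : ℂ) ^ i * ((t : ℂ) ^ d)⁻¹ := by
        filter_upwards [eventually_gt_atTop (0 : ℝ)] with t ht
        have h0 : ((t : ℝ) : ℂ) ≠ 0 := by exact_mod_cast ht.ne'
        push_cast [Complex.ofReal_zpow]
        rw [zpow_sub₀ h0, zpow_natCast, zpow_natCast, div_eq_mul_inv]
      simpa using (tendsto_const_nhds (x := c i)).mul (hco.congr' hev)
  have hsum := tendsto_finset_sum (Finset.range (d + 1)) key
  rw [Finset.sum_ite_eq' (Finset.range (d + 1)) d (fun _ => c d)] at hsum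
  rw [if_pos (Finset.self_mem_range_succ d)] at hsum
  refine hsum.congr fun t => ?_
  rw [Finset.sum_mul]
  exact Finset.sum_congr rfl fun i _ => (mul_assoc _ _ _).symm

private lemma polyC (P : Polynomial ℂ) :
    Filter.Tendsto (fun t : ℝ => P.eval (t : ℂ) * ((t : ℂ) ^ P.natDegree)⁻¹) atTop
      (𝓝 P.leadingCoeff) := by
  have := polyC_aux (fun i => P.coeff i) P.natDegree
  rw [Polynomial.leadingCoeff]
  refine this.congr fun t => ?_
  rw [Polynomial.eval_eq_sum_range]

private lemma polyD (P : Polynomial ℂ) (hP : P ≠ 0) :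
    ∀ᶠ t : ℝ in atTop, ‖P.leadingCoeff‖ / 2 * t ^ P.natDegree ≤ ‖P.eval (t : ℂ)‖ ∧
      ‖P.eval (t : ℂ)‖ ≤ 2 * ‖P.leadingCoeff‖ * t ^ P.natDegree := by
  have ha : 0 < ‖P.leadingCoeff‖ := norm_pos_iff.mpr (leadingCoeff_ne_zero.mpr hP)
  have hn := (polyC P).norm
  filter_upwards [hn.eventually_const_lt (half_lt_self ha),
    hn.eventually_lt_const (by linarith : ‖P.leadingCoeff‖ < 2 * ‖P.leadingCoeff‖),
    eventually_gt_atTop (0 : ℝ)] with t h1 h2 ht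
  have htd : (0 : ℝ) < t ^ P.natDegree := pow_pos ht _
  have hnorm : ‖P.eval (t : ℂ) * ((t : ℂ) ^ P.natDegree)⁻¹‖
      = ‖P.eval (t : ℂ)‖ / t ^ P.natDegree := by
    rw [norm_mul, norm_inv, norm_pow, Complex.norm_real, Real.norm_eq_abs, abs_of_pos ht,
      div_eq_mul_inv]
  rw [hnorm] at h1 h2
  exact ⟨((lt_div_iff₀ htd).mp h1).le, ((div_lt_iff₀ htd).mp h2).le⟩

/-- If a rational function `p/q` of `u⁻¹ * exp (1/u)` extends meromorphically through
`u = 0`, then `p/q` is constant. -/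
theorem rational_of_inv_mul_exp_inv_constant (p q : Polynomial ℂ) (hq : q ≠ 0)
    (h : ℂ → ℂ) (hh : MeromorphicAt h 0)
    (heq : ∀ᶠ u in nhdsWithin 0 {(0 : ℂ)}ᶜ,
      h u * q.eval (u⁻¹ * Complex.exp (1 / u)) = p.eval (u⁻¹ * Complex.exp (1 / u))) :
    ∃ c : ℂ, p = Polynomial.C c * q := by
  set c : ℂ := p.coeff q.natDegree / q.leadingCoeff with hc
  refine ⟨c, ?_⟩
  rw [← sub_eq_zero]
  set r : Polynomial ℂ := p - Polynomial.C c * q with hrdef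
  by_contra hrne
  have hqlc : q.leadingCoeff ≠ 0 := Polynomial.leadingCoeff_ne_zero.mpr hq
  have hcoeff : r.coeff q.natDegree = 0 := by
    rw [hrdef, Polynomial.coeff_sub, Polynomial.coeff_C_mul, Polynomial.coeff_natDegree, hc,
      div_mul_cancel₀ _ hqlc, sub_self]
  have hdeg : r.natDegree ≠ q.natDegree := by
    intro H
    exact (Polynomial.leadingCoeff_ne_zero.mpr hrne)
      (by rw [Polynomial.leadingCoeff, H]; exact hcoeff)
  -- pass to the positive real axis
  have L : Filter.Tendsto (fun x : ℝ => (x : ℂ)) (𝓝[>] (0 : ℝ)) (𝓝[≠] (0 : ℂ)) := by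
    refine tendsto_nhdsWithin_iff.mpr ⟨?_, ?_⟩
    · have : Filter.Tendsto (fun x : ℝ => (x : ℂ)) (𝓝 (0 : ℝ)) (𝓝 (0 : ℂ)) := by
        simpa using (Complex.continuous_ofReal.tendsto 0)
      exact this.mono_left nhdsWithin_le_nhds
    · filter_upwards [self_mem_nhdsWithin] with x (hx : 0 < x)
      simp only [Set.mem_compl_iff, Set.mem_singleton_iff]
      exact_mod_cast hx.ne'
  set F : ℝ → ℝ := fun x => Real.exp (1 / x) / x with hF
  have hFcast : ∀ x : ℝ, 0 < x →
      ((x : ℂ))⁻¹ * Complex.exp (1 / (x : ℂ)) = ((F x : ℝ) : ℂ) := by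
    intro x hx
    simp only [hF]
    push_cast [Complex.ofReal_exp]
    ring
  have hFtop : Filter.Tendsto F (𝓝[>] (0 : ℝ)) atTop := by
    rw [hF]
    refine (expB 0).congr fun x => ?_
    rw [zpow_zero, one_mul]
  -- meromorphic function h' = h - c with h' * q(f) = r(f)
  set h' : ℂ → ℂ := fun z => h z - c with hh'def
  have hh' : MeromorphicAt h' 0 := hh.sub (MeromorphicAt.const c 0)
  have heq' : ∀ᶠ u in 𝓝[≠] (0 : ℂ),
      h' u * q.eval (u⁻¹ * Complex.exp (1 / u)) = r.eval (u⁻¹ * Complex.exp (1 / u)) := by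
    filter_upwards [heq] with u hu
    simp only [hh'def, hrdef, Polynomial.eval_sub, Polynomial.eval_mul, Polynomial.eval_C]
    rw [sub_mul, hu]
  have heqR : ∀ᶠ x : ℝ in 𝓝[>] (0 : ℝ),
      h' (x : ℂ) * q.eval (((F x : ℝ) : ℂ)) = r.eval (((F x : ℝ) : ℂ)) := by
    filter_upwards [L.eventually heq', self_mem_nhdsWithin] with x hx (hx0 : 0 < x)
    rwa [hFcast x hx0] at hx
  rcases eq_or_ne (meromorphicOrderAt h' 0) ⊤ with htop | hne
  · -- h' vanishes identically near 0, so r has unboundedly many roots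
    have h0 := meromorphicOrderAt_eq_top_iff.mp htop
    have hroot : ∀ᶠ x : ℝ in 𝓝[>] (0 : ℝ), r.IsRoot (((F x : ℝ) : ℂ)) := by
      filter_upwards [heqR, L.eventually h0] with x hx h0x
      rw [Polynomial.IsRoot, ← hx, h0x, zero_mul]
    have hfin : {t : ℝ | r.IsRoot ((t : ℝ) : ℂ)}.Finite :=
      (Polynomial.finite_setOf_isRoot hrne).preimage Complex.ofReal_injective.injOn
    obtain ⟨M, hM⟩ := hfin.bddAbove
    obtain ⟨x, h1, h2⟩ :=
      ((hroot.mono fun x hx => hM hx).and (hFtop.eventually (eventually_gt_atTop M))).exists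
    exact absurd h1 (not_le.mpr h2)
  · obtain ⟨m, hm⟩ := WithTop.ne_top_iff_exists.mp hne
    obtain ⟨g, hg_an, hg0, hg_eq⟩ := (meromorphicOrderAt_eq_int_iff hh').mp hm.symm
    have hgpos : 0 < ‖g 0‖ := norm_pos_iff.mpr hg0
    have hgc : Filter.Tendsto (fun z => ‖g z‖) (𝓝 (0 : ℂ)) (𝓝 ‖g 0‖) :=
      hg_an.continuousAt.tendsto.norm
    have hg_lb := hgc.eventually_const_lt (half_lt_self hgpos)
    have hg_ub := hgc.eventually_lt_const (by linarith : ‖g 0‖ < 2 * ‖g 0‖)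
    have LR : Filter.Tendsto (fun x : ℝ => (x : ℂ)) (𝓝[>] (0 : ℝ)) (𝓝 (0 : ℂ)) :=
      L.mono_right nhdsWithin_le_nhds
    have hapos : (0 : ℝ) < ‖q.leadingCoeff‖ := norm_pos_iff.mpr hqlc
    have hbpos : (0 : ℝ) < ‖r.leadingCoeff‖ :=
      norm_pos_iff.mpr (Polynomial.leadingCoeff_ne_zero.mpr hrne)
    set a : ℝ := ‖q.leadingCoeff‖
    set b : ℝ := ‖r.leadingCoeff‖
    -- the master eventual inequality data
    have master : ∀ᶠ x : ℝ in 𝓝[>] (0 : ℝ),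
        0 < x ∧ x ^ m * ‖g (x : ℂ)‖ * ‖q.eval (((F x : ℝ) : ℂ))‖ = ‖r.eval (((F x : ℝ) : ℂ))‖ ∧
        ‖g 0‖ / 2 ≤ ‖g (x : ℂ)‖ ∧ ‖g (x : ℂ)‖ ≤ 2 * ‖g 0‖ ∧
        (a / 2 * (F x) ^ q.natDegree ≤ ‖q.eval (((F x : ℝ) : ℂ))‖ ∧
          ‖q.eval (((F x : ℝ) : ℂ))‖ ≤ 2 * a * (F x) ^ q.natDegree) ∧
        (b / 2 * (F x) ^ r.natDegree ≤ ‖r.eval (((F x : ℝ) : ℂ))‖ ∧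
          ‖r.eval (((F x : ℝ) : ℂ))‖ ≤ 2 * b * (F x) ^ r.natDegree) ∧
        1 ≤ F x := by
      filter_upwards [self_mem_nhdsWithin, heqR, L.eventually hg_eq, LR.eventually hg_lb,
        LR.eventually hg_ub, hFtop.eventually (polyD q hq), hFtop.eventually (polyD r hrne),
        hFtop.eventually (eventually_ge_atTop (1 : ℝ))] with x hx0' hx hge hlb hub hQ hR hF1
      have hx0 : (0 : ℝ) < x := hx0'
      refine ⟨hx0, ?_, hlb.le, hub.le, hQ, hR, hF1⟩
      have : ‖h' (x : ℂ)‖ = x ^ m * ‖g (x : ℂ)‖ := by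
        rw [hge, sub_zero, smul_eq_mul, norm_mul, norm_zpow, Complex.norm_real,
          Real.norm_eq_abs, abs_of_pos hx0]
      rw [← this, ← norm_mul, hx]
    rcases lt_or_gt_of_ne hdeg with hlt | hgt
    · -- natDegree r < natDegree q : eventually  (‖g 0‖/2 * (a/2)) * (x^m * F x) ≤ 2 * b
      have key : ∀ᶠ x : ℝ in 𝓝[>] (0 : ℝ),
          (‖g 0‖ / 2 * (a / 2)) * (x ^ m * (Real.exp (1 / x) / x)) ≤ 2 * b := by
        filter_upwards [master] with x ⟨hx0, hE, hGl, _, ⟨hQl, _⟩, ⟨_, hRu⟩, hF1⟩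
        have hA : (0 : ℝ) < x ^ m := zpow_pos hx0 m
        have hFpos : (0 : ℝ) < F x := lt_of_lt_of_le one_pos hF1
        have hFr : (0 : ℝ) < (F x) ^ r.natDegree := pow_pos hFpos _
        have hpow : (F x) ^ r.natDegree * F x ≤ (F x) ^ q.natDegree := by
          rw [← pow_succ]
          exact pow_le_pow_right₀ hF1 hlt
        have hG0 : (0 : ℝ) ≤ ‖g (x : ℂ)‖ := le_trans (by positivity) hGl
        have s1 : x ^ m * (‖g 0‖ / 2) * (a / 2 * ((F x) ^ r.natDegree * F x))
            ≤ x ^ m * ‖g (x : ℂ)‖ * ‖q.eval (((F x : ℝ) : ℂ))‖ := by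
          refine mul_le_mul (mul_le_mul_of_nonneg_left hGl hA.le)
            (le_trans (mul_le_mul_of_nonneg_left hpow (by positivity)) hQl)
            (by positivity) (mul_nonneg hA.le hG0)
        rw [hE] at s1
        have s2 : x ^ m * (‖g 0‖ / 2) * (a / 2 * ((F x) ^ r.natDegree * F x))
            ≤ 2 * b * (F x) ^ r.natDegree := s1.trans hRu
        have s3 : (‖g 0‖ / 2 * (a / 2)) * (x ^ m * (Real.exp (1 / x) / x)) * (F x) ^ r.natDegree
            ≤ 2 * b * (F x) ^ r.natDegree := by
          calc (‖g 0‖ / 2 * (a / 2)) * (x ^ m * (Real.exp (1 / x) / x)) * (F x) ^ r.natDegree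
              = x ^ m * (‖g 0‖ / 2) * (a / 2 * ((F x) ^ r.natDegree * F x)) := by
                simp only [hF]; ring
            _ ≤ 2 * b * (F x) ^ r.natDegree := s2
        exact le_of_mul_le_mul_right s3 hFr
      have htend : Filter.Tendsto
          (fun x : ℝ => (‖g 0‖ / 2 * (a / 2)) * (x ^ m * (Real.exp (1 / x) / x)))
          (𝓝[>] (0 : ℝ)) atTop :=
        (expB m).const_mul_atTop (by positivity)
      obtain ⟨x, h1, h2⟩ := (key.and (htend.eventually (eventually_gt_atTop (2 * b)))).exists
      exact absurd h1 (not_le.mpr h2)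
    · -- natDegree q < natDegree r
      have key : ∀ᶠ x : ℝ in 𝓝[>] (0 : ℝ),
          (b / 2) * (x ^ (-m) * (Real.exp (1 / x) / x)) ≤ 2 * ‖g 0‖ * (2 * a) := by
        filter_upwards [master] with x ⟨hx0, hE, hGl, hGu, ⟨_, hQu⟩, ⟨hRl, _⟩, hF1⟩
        have hA : (0 : ℝ) < x ^ m := zpow_pos hx0 m
        have hFpos : (0 : ℝ) < F x := lt_of_lt_of_le one_pos hF1
        have hFq : (0 : ℝ) < (F x) ^ q.natDegree := pow_pos hFpos _
        have hpow : (F x) ^ q.natDegree * F x ≤ (F x) ^ r.natDegree := by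
          rw [← pow_succ]
          exact pow_le_pow_right₀ hF1 hgt
        have hG0 : (0 : ℝ) ≤ ‖g (x : ℂ)‖ := le_trans (by positivity) hGl
        have s1 : b / 2 * ((F x) ^ q.natDegree * F x)
            ≤ x ^ m * ‖g (x : ℂ)‖ * ‖q.eval (((F x : ℝ) : ℂ))‖ := by
          rw [hE]
          exact le_trans (mul_le_mul_of_nonneg_left hpow (by positivity)) hRl
        have s2 : x ^ m * ‖g (x : ℂ)‖ * ‖q.eval (((F x : ℝ) : ℂ))‖
            ≤ x ^ m * (2 * ‖g 0‖) * (2 * a * (F x) ^ q.natDegree) := by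
          refine mul_le_mul (mul_le_mul_of_nonneg_left hGu hA.le) hQu (norm_nonneg _)
            (by positivity)
        have s3 : (b / 2) * (x ^ (-m) * (Real.exp (1 / x) / x)) * (x ^ m * (F x) ^ q.natDegree)
            ≤ 2 * ‖g 0‖ * (2 * a) * (x ^ m * (F x) ^ q.natDegree) := by
          calc (b / 2) * (x ^ (-m) * (Real.exp (1 / x) / x)) * (x ^ m * (F x) ^ q.natDegree)
              = b / 2 * ((F x) ^ q.natDegree * F x) * (x ^ (-m) * x ^ m) := by
                simp only [hF]; ring
            _ = b / 2 * ((F x) ^ q.natDegree * F x) := by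
                rw [← zpow_add₀ hx0.ne', neg_add_cancel, zpow_zero, mul_one]
            _ ≤ x ^ m * (2 * ‖g 0‖) * (2 * a * (F x) ^ q.natDegree) := s1.trans s2
            _ = 2 * ‖g 0‖ * (2 * a) * (x ^ m * (F x) ^ q.natDegree) := by ring
        exact le_of_mul_le_mul_right s3 (mul_pos hA hFq)
      have htend : Filter.Tendsto
          (fun x : ℝ => (b / 2) * (x ^ (-m) * (Real.exp (1 / x) / x)))
          (𝓝[>] (0 : ℝ)) atTop :=
        (expB (-m)).const_mul_atTop (by positivity)
      obtain ⟨x, h1, h2⟩ :=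
        (key.and (htend.eventually (eventually_gt_atTop (2 * ‖g 0‖ * (2 * a))))).exists
      exact absurd h1 (not_le.mpr h2)
end
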